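/- arXiv:1007.4736 — 5 statements merged into one kernel-verified Lean document; each statement's English description precedes it below -/
import Mathlib

section
/- Every g ∈ Γ satisfying gω = ω acts as the identity on T_K, i.e. g(x) = x for all x ∈ T_K. -/
/-!
STATEMENT 1.
Context: `D < 0` squarefree, `K = ℚ(√D) ⊆ ℂ`, `O` its ring of integers (encoded:
`z ∈ O ↔ z ∈ K ∧ IsIntegral ℤ z`), `h` a nondegenerate hermitian form on `K^{n+1}`
given by a matrix `H` with entries in `O`, of signature `(n,1)` over `ℂ`.
`U(Λ)` is the group of `O`-module automorphisms of `Λ = O^{n+1}` preserving `h`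
(encoded: invertible matrices `g` such that `g` and `g⁻¹` have entries in `O`
and `gᴴ H g = H`), `Γ ≤ U(Λ)` of finite index.  `ω ∈ ℂ^{n+1}`, `h(ω,ω) < 0`;
`T_K` as in the paper.
Claim: every `g ∈ Γ` with `gω = ω` acts as the identity on `T_K`.
-/

open Matrix Complex

set_option synthInstance.maxHeartbeats 800000
set_option maxHeartbeats 1000000

/-- determinant of a matrix with entries in an intermediate field lies in it -/
lemma detK (K : IntermediateField ℚ ℂ) {m : ℕ} (M : Matrix (Fin m) (Fin m) ℂ)
    (h : ∀ i j, M i j ∈ K) : M.det ∈ K := by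
  let M₀ : Matrix (Fin m) (Fin m) K := Matrix.of fun i j => (⟨M i j, h i j⟩ : K)
  have hM : M = M₀.map (algebraMap K ℂ) := by
    ext i j; rfl
  have h2 : M.det = algebraMap K ℂ M₀.det := by
    rw [RingHom.map_det, RingHom.mapMatrix_apply]
    exact congrArg Matrix.det hM
  rw [h2]
  exact (M₀.det).2

lemma adjK (K : IntermediateField ℚ ℂ) {m : ℕ} (M : Matrix (Fin m) (Fin m) ℂ)
    (h : ∀ i j, M i j ∈ K) : ∀ i j, M.adjugate i j ∈ K := by
  let M₀ : Matrix (Fin m) (Fin m) K := Matrix.of fun i j => (⟨M i j, h i j⟩ : K)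
  have hM : M = M₀.map (algebraMap K ℂ) := by
    ext i j; rfl
  intro i j
  have h2 : M.adjugate = (M₀.adjugate).map (algebraMap K ℂ) := by
    have h3 := (algebraMap K ℂ).map_adjugate M₀
    rw [RingHom.mapMatrix_apply, RingHom.mapMatrix_apply] at h3
    rw [hM, ← h3]
  rw [h2]
  exact (M₀.adjugate i j).2

lemma invK (K : IntermediateField ℚ ℂ) {m : ℕ} (M : Matrix (Fin m) (Fin m) ℂ)
    (h : ∀ i j, M i j ∈ K) : ∀ i j, M⁻¹ i j ∈ K := by
  intro i j
  rw [Matrix.inv_def]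
  have : (Ring.inverse M.det • M.adjugate) i j = (M.det)⁻¹ * M.adjugate i j := by
    simp [Ring.inverse_eq_inv']
  rw [this]
  exact K.mul_mem (K.inv_mem (detK K M h)) (adjK K M h i j)

theorem stmt1
    (n : ℕ) (hn : 1 ≤ n)
    (D : ℤ) (hD : D < 0) (hDsf : Squarefree D)
    (δ : ℂ) (hδ : δ ^ 2 = (D : ℂ))
    (K : IntermediateField ℚ ℂ) (hK : K = IntermediateField.adjoin ℚ {δ})
    (H : Matrix (Fin (n + 1)) (Fin (n + 1)) ℂ)
    (hHK : ∀ i j, H i j ∈ K ∧ IsIntegral ℤ (H i j))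
    (hHherm : H.IsHermitian)
    (hsig : ∃ P : Matrix (Fin (n + 1)) (Fin (n + 1)) ℂ, IsUnit P.det ∧
      Pᴴ * H * P = Matrix.diagonal (fun i => if i = Fin.last n then (-1 : ℂ) else 1))
    (UΛ : Subgroup (GL (Fin (n + 1)) ℂ))
    (hUΛ : ∀ g : GL (Fin (n + 1)) ℂ, g ∈ UΛ ↔
      ((∀ i j, (g : Matrix (Fin (n + 1)) (Fin (n + 1)) ℂ) i j ∈ K ∧
          IsIntegral ℤ ((g : Matrix (Fin (n + 1)) (Fin (n + 1)) ℂ) i j)) ∧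
       (∀ i j, ((g⁻¹ : GL (Fin (n + 1)) ℂ) : Matrix (Fin (n + 1)) (Fin (n + 1)) ℂ) i j ∈ K ∧
          IsIntegral ℤ (((g⁻¹ : GL (Fin (n + 1)) ℂ) : Matrix (Fin (n + 1)) (Fin (n + 1)) ℂ) i j)) ∧
       (g : Matrix (Fin (n + 1)) (Fin (n + 1)) ℂ)ᴴ * H *
          (g : Matrix (Fin (n + 1)) (Fin (n + 1)) ℂ) = H))
    (Γ : Subgroup (GL (Fin (n + 1)) ℂ)) (hΓ : Γ ≤ UΛ) (hfin : Γ.relIndex UΛ ≠ 0)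
    (ω : Fin (n + 1) → ℂ) (hω : (star ω ⬝ᵥ H.mulVec ω).re < 0)
    (g : GL (Fin (n + 1)) ℂ) (hgΓ : g ∈ Γ)
    (hgω : (g : Matrix (Fin (n + 1)) (Fin (n + 1)) ℂ).mulVec ω = ω) :
    ∀ x : Fin (n + 1) → ℂ, (∀ i, x i ∈ K) →
      (∀ s : Fin (n + 1) → ℂ, (∀ i, s i ∈ K) → star ω ⬝ᵥ H.mulVec s = 0 →
        star s ⬝ᵥ H.mulVec x = 0) →
      (g : Matrix (Fin (n + 1)) (Fin (n + 1)) ℂ).mulVec x = x := by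
  intro x hxK hxT
  -- K is stable under complex conjugation
  have hδK : δ ∈ K := by
    rw [hK]; exact IntermediateField.subset_adjoin ℚ {δ} rfl
  have hδne : starRingEnd ℂ δ = -δ := by
    have h1 : (starRingEnd ℂ δ - δ) * (starRingEnd ℂ δ + δ) = 0 := by
      have h2 : (starRingEnd ℂ) δ ^ 2 = δ ^ 2 := by
        rw [← map_pow, hδ, map_intCast]
      linear_combination h2
    rcases mul_eq_zero.mp h1 with h2 | h2
    · exfalso
      have hreal : starRingEnd ℂ δ = δ := by linear_combination h2
      have him : δ.im = 0 := Complex.conj_eq_iff_im.mp hreal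
      have h5 : ((δ.re : ℂ)) ^ 2 = (D : ℂ) := by
        rw [← hδ]; congr 1
        exact Complex.conj_eq_iff_re.mp hreal
      have hre : (δ.re) ^ 2 = (D : ℝ) := by exact_mod_cast h5
      have : (0 : ℝ) ≤ (D : ℝ) := hre ▸ sq_nonneg _
      have : (0 : ℤ) ≤ D := by exact_mod_cast this
      omega
    · linear_combination h2
  have hconjK : ∀ z : ℂ, z ∈ K → starRingEnd ℂ z ∈ K := by
    intro z hz
    set f : ℂ →ₐ[ℚ] ℂ := (starRingEnd ℂ).toRatAlgHom with hf
    have hfz : f z = starRingEnd ℂ z := rfl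
    have h1 : starRingEnd ℂ z ∈ K.map f := ⟨z, hz, hfz⟩
    have h2 : K.map f ≤ K := by
      conv_lhs => rw [hK]
      rw [IntermediateField.adjoin_map]
      apply IntermediateField.adjoin_le_iff.mpr
      rintro w ⟨u, hu, rfl⟩
      rcases hu with rfl
      have : f u = -u := hδne
      rw [this]
      exact K.neg_mem hδK
    exact h2 h1
  -- H is invertible
  obtain ⟨P, hP, hPH⟩ := hsig
  have hdetH : IsUnit H.det := by
    have hdiag : (Matrix.diagonal (fun i : Fin (n+1) =>
        if i = Fin.last n then (-1 : ℂ) else 1)).det ≠ 0 := by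
      rw [Matrix.det_diagonal]
      apply Finset.prod_ne_zero_iff.mpr
      intro i _
      split <;> norm_num
    have := congrArg Matrix.det hPH
    rw [Matrix.det_mul, Matrix.det_mul] at this
    have hH0 : H.det ≠ 0 := by
      intro h0
      rw [h0, mul_zero, zero_mul] at this
      exact hdiag this.symm
    exact isUnit_iff_ne_zero.mpr hH0
  have hHK' : ∀ i j, H i j ∈ K := fun i j => (hHK i j).1
  have hHinvK : ∀ i j, H⁻¹ i j ∈ K := invK K H hHK'
  -- entries of g
  have hgU := (hUΛ g).mp (hΓ hgΓ)
  have hgK : ∀ i j, (g : Matrix (Fin (n + 1)) (Fin (n + 1)) ℂ) i j ∈ K :=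
    fun i j => (hgU.1 i j).1
  set A : Matrix (Fin (n + 1)) (Fin (n + 1)) ℂ := (g : Matrix (Fin (n + 1)) (Fin (n + 1)) ℂ)
  funext i
  -- the i-th row of A - 1
  set r : Fin (n + 1) → ℂ := fun j => A i j - (1 : Matrix (Fin (n + 1)) (Fin (n + 1)) ℂ) i j
    with hr
  have hrK : ∀ j, r j ∈ K := by
    intro j
    refine K.sub_mem (hgK i j) ?_
    by_cases h : i = j
    · simpa [Matrix.one_apply, h] using K.one_mem
    · simpa [Matrix.one_apply, h] using K.zero_mem
  have hrω : r ⬝ᵥ ω = 0 := by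
    have := congrFun hgω i
    simp only [Matrix.mulVec, dotProduct] at this ⊢
    simp only [hr, sub_mul, Finset.sum_sub_distrib, this]
    simp [Matrix.one_apply, Finset.sum_ite_eq, ite_mul]
  -- key: r ⬝ᵥ x = 0
  set s : Fin (n + 1) → ℂ := H⁻¹.mulVec (star r) with hs
  have hsK : ∀ j, s j ∈ K := by
    intro j
    show ∑ k, H⁻¹ j k * (star r) k ∈ K
    apply K.sum_mem
    intro k _
    exact K.mul_mem (hHinvK j k) (hconjK _ (hrK k))
  have hHs : H.mulVec s = star r := by
    rw [hs, Matrix.mulVec_mulVec, Matrix.mul_nonsing_inv H hdetH, Matrix.one_mulVec]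
  have hortho : star ω ⬝ᵥ H.mulVec s = 0 := by
    rw [hHs, Matrix.star_dotProduct_star, hrω, star_zero]
  have hkey := hxT s hsK hortho
  have hstars : star s = r ᵥ* H⁻¹ := by
    rw [hs, Matrix.star_mulVec, star_star, hHherm.inv.eq]
  rw [hstars, Matrix.dotProduct_mulVec, Matrix.vecMul_vecMul,
    Matrix.nonsing_inv_mul H hdetH, Matrix.vecMul_one] at hkey
  -- conclude
  have : (A.mulVec x) i - x i = r ⬝ᵥ x := by
    simp only [Matrix.mulVec, dotProduct, hr, sub_mul, Finset.sum_sub_distrib]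
    congr 1
    simp [Matrix.one_apply, ite_mul]
  exact sub_eq_zero.mp (this.trans hkey)
end

section
/- Suppose g ∈ G acts on the tangent space V neither as the identity nor as a quasi-reflection, and let r be the multiplicative order of α(g). If r ∈ {9, 16, 18}, then Σ(g|_V) ≥ 1 (for every squarefree D < 0). -/
open Matrix Complex Polynomial

set_option synthInstance.maxHeartbeats 800000
set_option maxHeartbeats 1000000

/-- The unique `t ∈ [0,1)` with `z = exp(2πi·t)` when `z` is a root of unity;
for an eigenvalue `ζ^a` (`ζ = e^{2πi/m}`, `0 ≤ a < m`) this is `a/m`. -/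
noncomputable def unitFrac (z : ℂ) : ℝ :=
  if 0 ≤ z.arg then z.arg / (2 * Real.pi) else z.arg / (2 * Real.pi) + 1

/-- The Reid–Tai sum `Σ(f) = Σ_i a_i/m` of an endomorphism, where the sum runs
over the eigenvalues of `f` counted with multiplicity (the roots of the
characteristic polynomial). -/
noncomputable def reidTaiSum {V : Type} [AddCommGroup V] [Module ℂ V]
    [Module.Finite ℂ V] [Module.Free ℂ V] (f : Module.End ℂ V) : ℝ :=
  ((LinearMap.charpoly f).roots.map unitFrac).sum

/-- `f` is a quasi-reflection: exactly one of its eigenvalues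
(counted with multiplicity) is different from `1`. -/
noncomputable def IsQuasiReflection {V : Type} [AddCommGroup V] [Module ℂ V]
    [Module.Finite ℂ V] [Module.Free ℂ V] (f : Module.End ℂ V) : Prop :=
  Multiset.card ((LinearMap.charpoly f).roots.filter (fun z => z ≠ 1)) = 1


lemma unitFrac_nonneg (z : ℂ) : 0 ≤ unitFrac z := by
  unfold unitFrac
  have h1 := Complex.neg_pi_lt_arg z
  have hπ := Real.pi_pos
  split_ifs with h
  · positivity
  · have h2 : (0:ℝ) < 2 * Real.pi := by positivity
    have : -1 < z.arg / (2 * Real.pi) := by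
      rw [neg_lt, ← neg_div, div_lt_one h2]; nlinarith
    linarith

lemma unitFrac_exp (m r : ℕ) (hm : m < r) :
    unitFrac (Complex.exp (2 * Real.pi * Complex.I * (m / r))) = m / r := by
  have hr0 : 0 < r := lt_of_le_of_lt (Nat.zero_le m) hm
  have hrR : (0:ℝ) < r := by exact_mod_cast hr0
  have hπ := Real.pi_pos
  set θ : ℝ := 2 * Real.pi * m / r with hθ
  have hmr : (m:ℝ) < r := by exact_mod_cast hm
  have hθ0 : 0 ≤ θ := by positivity
  have hθ2π : θ < 2 * Real.pi := by
    rw [hθ, div_lt_iff₀ hrR]; nlinarith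
  have hexp : Complex.exp (2 * Real.pi * Complex.I * (m / r)) = Complex.exp (θ * Complex.I) := by
    congr 1; rw [hθ]; push_cast; ring
  have hval : θ / (2 * Real.pi) = m / r := by
    rw [hθ]; field_simp
  rcases le_or_gt (2*m) r with h | h
  · have hθπ : θ ≤ Real.pi := by
      rw [hθ, div_le_iff₀ hrR]
      have : (2*m:ℝ) ≤ r := by exact_mod_cast h
      nlinarith
    have harg : (Complex.exp (θ*Complex.I)).arg = θ := by
      rw [Complex.exp_mul_I]; exact Complex.arg_cos_add_sin_mul_I ⟨by linarith, hθπ⟩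
    rw [hexp]; unfold unitFrac; rw [harg, if_pos hθ0, hval]
  · have hθπ : Real.pi < θ := by
      rw [hθ, lt_div_iff₀ hrR]
      have : (r:ℝ) < 2*m := by exact_mod_cast h
      nlinarith
    have hexp2 : Complex.exp (θ * Complex.I) = Complex.exp (((θ - 2*Real.pi : ℝ)) * Complex.I) := by
      have : ((θ:ℝ) : ℂ) * Complex.I = (((θ - 2*Real.pi : ℝ)) : ℂ) * Complex.I + 2*(Real.pi:ℂ)*Complex.I := by
        push_cast; ring
      rw [this, Complex.exp_add, Complex.exp_two_pi_mul_I, mul_one]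
    have harg : (Complex.exp (θ*Complex.I)).arg = θ - 2*Real.pi := by
      rw [hexp2, Complex.exp_mul_I]
      exact Complex.arg_cos_add_sin_mul_I (θ := θ - 2*Real.pi) ⟨by linarith, by linarith⟩
    rw [hexp]; unfold unitFrac; rw [harg, if_neg (by push_neg; linarith)]
    rw [sub_div, ← hval]
    field_simp
    ring

lemma sum_mod_lemma (r : ℕ) (hr : r = 9 ∨ r = 16 ∨ r = 18) (j : ℕ) (hj : j.Coprime r)
    (T : Finset (ZMod r)) (h1 : (1 : ZMod r) ∈ T)
    (hunit : ∀ k ∈ T, (ZMod.val k).Coprime r)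
    (hmul : ∀ k₁ ∈ T, ∀ k₂ ∈ T, k₁ * k₂ ∈ T)
    (hcard : Nat.totient r ≤ 2 * T.card) :
    r ≤ ∑ k ∈ T.erase 1, (j * (ZMod.val k - 1)) % r := by
  have hrpos : 0 < r := by rcases hr with h|h|h <;> omega
  haveI : NeZero r := ⟨by omega⟩
  have hTu : ∀ k ∈ T, IsUnit k := by
    intro k hk
    have h := (ZMod.isUnit_iff_coprime (ZMod.val k) r).mpr (hunit k hk)
    rwa [ZMod.natCast_val, ZMod.cast_id] at h
  have hpow : ∀ k ∈ T, ∀ i : ℕ, k ^ (i + 1) ∈ T := by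
    intro k hk i
    induction i with
    | zero => simpa using hk
    | succ m ih => rw [pow_succ]; exact hmul _ ih _ hk
  have hinv : ∀ k ∈ T, ∃ k' ∈ T, k * k' = 1 := by
    intro k hk
    obtain ⟨u, hu⟩ := hTu k hk
    have hord : 0 < orderOf u := orderOf_pos u
    have hpow1 : k ^ (orderOf u) = 1 := by
      rw [← hu, ← Units.val_pow_eq_pow_val, pow_orderOf_eq_one, Units.val_one]
    rcases Nat.eq_zero_or_pos (orderOf u - 1) with h0 | h0
    · refine ⟨1, h1, ?_⟩
      have : k ^ 1 = 1 := by rw [show (1:ℕ) = orderOf u by omega, hpow1]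
      simpa using this
    · refine ⟨k ^ (orderOf u - 1), ?_, ?_⟩
      · have := hpow k hk (orderOf u - 1 - 1)
        rwa [show orderOf u - 1 - 1 + 1 = orderOf u - 1 by omega] at this
      · rw [← pow_succ', show orderOf u - 1 + 1 = orderOf u by omega, hpow1]
  have hsq : ∀ u : ZMod r, IsUnit u → u * u ∈ T := by
    intro u hu
    by_cases huT : u ∈ T
    · exact hmul u huT u huT
    set U : Finset (ZMod r) := Finset.univ.image (fun w : (ZMod r)ˣ => (w : ZMod r)) with hU
    have hUcard : U.card = Nat.totient r := by
      rw [hU, Finset.card_image_of_injective _ Units.val_injective]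
      simp [ZMod.card_units_eq_totient]
    have hmemU : ∀ x : ZMod r, IsUnit x → x ∈ U := fun x hx =>
      Finset.mem_image.mpr ⟨hx.unit, Finset.mem_univ _, rfl⟩
    set uT : Finset (ZMod r) := T.image (fun t => u * t) with huT'
    have huTcard : uT.card = T.card :=
      Finset.card_image_of_injective _ (IsUnit.mul_right_injective hu)
    have hdisj : Disjoint uT T := by
      rw [Finset.disjoint_left]
      rintro x hxuT hxT
      obtain ⟨t, htT, rfl⟩ := Finset.mem_image.mp hxuT
      obtain ⟨t', ht'T, htt'⟩ := hinv t htT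
      have : u ∈ T := by
        have : u * t * t' ∈ T := hmul _ hxT _ ht'T
        rwa [mul_assoc, htt', mul_one] at this
      exact huT this
    have hsubU : uT ∪ T ⊆ U := by
      intro x hx
      rcases Finset.mem_union.mp hx with hx | hx
      · obtain ⟨t, htT, rfl⟩ := Finset.mem_image.mp hx
        exact hmemU _ (hu.mul (hTu t htT))
      · exact hmemU _ (hTu x hx)
    have hcardeq : (uT ∪ T).card = uT.card + T.card := Finset.card_union_of_disjoint hdisj
    have hUeq : uT ∪ T = U := by
      apply Finset.eq_of_subset_of_card_le hsubU
      rw [hcardeq, huTcard, hUcard]; omega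
    have huuU : u * u ∈ uT ∪ T := by rw [hUeq]; exact hmemU _ (hu.mul hu)
    rcases Finset.mem_union.mp huuU with hx | hx
    · obtain ⟨t, htT, ht⟩ := Finset.mem_image.mp hx
      have : u = t := IsUnit.mul_right_injective hu ht.symm
      exact absurd (this ▸ htT) huT
    · exact hx
  have hred : ∀ m, (j * m) % r = ((j % r) * m) % r := by
    intro m
    conv_lhs => rw [Nat.mul_mod]
    conv_rhs => rw [Nat.mul_mod, Nat.mod_mod_of_dvd _ dvd_rfl]
  have hj' : (j % r).Coprime r := by
    have h2 := hj.symm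
    unfold Nat.Coprime at h2 ⊢
    rwa [Nat.gcd_rec] at h2
  have hlt : j % r < r := Nat.mod_lt _ hrpos
  rcases hr with rfl | rfl | rfl
  · -- r = 9
    have h4 : (4 : ZMod 9) ∈ T := by
      have := hsq 2 (IsUnit.of_mul_eq_one (a := (2 : ZMod 9)) 5 (by decide))
      rwa [show (2:ZMod 9)*2 = 4 by decide] at this
    have h7 : (7 : ZMod 9) ∈ T := by
      have := hmul 4 h4 4 h4
      rwa [show (4:ZMod 9)*4 = 7 by decide] at this
    have hsub : ({4, 7} : Finset (ZMod 9)) ⊆ T.erase 1 := by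
      intro x hx
      rcases Finset.mem_insert.mp hx with rfl | hx
      · exact Finset.mem_erase.mpr ⟨by decide, h4⟩
      · rcases Finset.mem_singleton.mp hx with rfl
        exact Finset.mem_erase.mpr ⟨by decide, h7⟩
    refine le_trans ?_ (Finset.sum_le_sum_of_subset hsub)
    rw [Finset.sum_pair (by decide : (4:ZMod 9) ≠ 7)]
    rw [show ZMod.val (4 : ZMod 9) = 4 by decide, show ZMod.val (7 : ZMod 9) = 7 by decide]
    norm_num
    rw [hred, hred]
    have key : ∀ j' : Fin 9, Nat.Coprime (j' : ℕ) 9 →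
        9 ≤ ((j' : ℕ) * 3) % 9 + ((j' : ℕ) * 6) % 9 := by decide
    exact key ⟨j % 9, hlt⟩ hj'
  · -- r = 16
    have h9 : (9 : ZMod 16) ∈ T := by
      have := hsq 3 (IsUnit.of_mul_eq_one (a := (3 : ZMod 16)) 11 (by decide))
      rwa [show (3:ZMod 16)*3 = 9 by decide] at this
    have h9u : IsUnit (9 : ZMod 16) := IsUnit.of_mul_eq_one (a := (9 : ZMod 16)) 9 (by decide)
    have hTcard : 4 ≤ T.card := by
      have : Nat.totient 16 = 8 := by decide
      omega
    obtain ⟨t, htT, htn⟩ : ∃ t ∈ T, t ∉ ({1, 9} : Finset (ZMod 16)) := by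
      rw [← Finset.not_subset]
      intro hsub
      have := Finset.card_le_card hsub
      have : ({1, 9} : Finset (ZMod 16)).card = 2 := by decide
      omega
    have ht1 : t ≠ 1 := fun h => htn (by rw [h]; exact Finset.mem_insert_self _ _)
    have ht9 : t ≠ 9 := fun h => htn (by rw [h]; simp)
    have htu : IsUnit t := hTu t htT
    have h9t : 9 * t ∈ T := hmul 9 h9 t htT
    have h9t9 : (9 : ZMod 16) ≠ 9 * t := by
      intro h
      apply ht1
      have := h9u.mul_right_injective (a := 9)
      have h' : (9 : ZMod 16) * 1 = 9 * t := by rwa [mul_one]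
      exact (this h').symm
    have ht9t : t ≠ 9 * t := by
      intro h
      have h' : (1 : ZMod 16) * t = 9 * t := by rwa [one_mul]
      have := htu.mul_left_injective h'
      exact absurd this.symm (by decide)
    have h9t1 : 9 * t ≠ 1 := by
      intro h
      apply ht9
      have : (9 : ZMod 16) * (9 * t) = 9 * 1 := by rw [h]
      rw [← mul_assoc, show (9:ZMod 16)*9 = 1 by decide, one_mul, mul_one] at this
      exact this
    have hsub : ({9, t, 9*t} : Finset (ZMod 16)) ⊆ T.erase 1 := by
      intro x hx
      rcases Finset.mem_insert.mp hx with rfl | hx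
      · exact Finset.mem_erase.mpr ⟨by decide, h9⟩
      rcases Finset.mem_insert.mp hx with rfl | hx
      · exact Finset.mem_erase.mpr ⟨ht1, htT⟩
      rcases Finset.mem_singleton.mp hx with rfl
      exact Finset.mem_erase.mpr ⟨h9t1, h9t⟩
    refine le_trans ?_ (Finset.sum_le_sum_of_subset hsub)
    rw [Finset.sum_insert (by simp [h9t9, ht9]; tauto),
        Finset.sum_insert (by simpa using ht9t)]
    rw [Finset.sum_singleton]
    rw [show ZMod.val (9 : ZMod 16) = 9 by decide]
    rw [show ZMod.val (9 * t) = (9 * ZMod.val t) % 16 by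
      rw [ZMod.val_mul, show ZMod.val (9 : ZMod 16) = 9 by decide]]
    norm_num
    rw [hred, hred, hred]
    have htv1 : ZMod.val t ≠ 1 := by
      intro h
      apply ht1
      have := ZMod.natCast_val (R := ZMod 16) t
      rw [h] at this
      simpa using this.symm
    have htv9 : ZMod.val t ≠ 9 := by
      intro h
      apply ht9
      have := ZMod.natCast_val (R := ZMod 16) t
      rw [h] at this
      rw [ZMod.cast_id] at this
      rw [← this]; norm_num
    have key : ∀ j' : Fin 16, ∀ tv : Fin 16, Nat.Coprime (j' : ℕ) 16 → Nat.Coprime (tv : ℕ) 16 →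
        (tv : ℕ) ≠ 1 → (tv : ℕ) ≠ 9 →
        16 ≤ ((j' : ℕ) * 8) % 16 + ((j' : ℕ) * ((tv : ℕ) - 1)) % 16 +
          ((j' : ℕ) * ((9 * (tv : ℕ)) % 16 - 1)) % 16 := by
      decide
    have hkey := key ⟨j % 16, hlt⟩ ⟨ZMod.val t, ZMod.val_lt t⟩ hj' (hunit t htT) htv1 htv9
    simp only [] at hkey ⊢
    omega
  · -- r = 18
    have h7 : (7 : ZMod 18) ∈ T := by
      have := hsq 5 (IsUnit.of_mul_eq_one (a := (5 : ZMod 18)) 11 (by decide))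
      rwa [show (5:ZMod 18)*5 = 7 by decide] at this
    have h13 : (13 : ZMod 18) ∈ T := by
      have := hmul 7 h7 7 h7
      rwa [show (7:ZMod 18)*7 = 13 by decide] at this
    have hsub : ({7, 13} : Finset (ZMod 18)) ⊆ T.erase 1 := by
      intro x hx
      rcases Finset.mem_insert.mp hx with rfl | hx
      · exact Finset.mem_erase.mpr ⟨by decide, h7⟩
      · rcases Finset.mem_singleton.mp hx with rfl
        exact Finset.mem_erase.mpr ⟨by decide, h13⟩
    refine le_trans ?_ (Finset.sum_le_sum_of_subset hsub)
    rw [Finset.sum_pair (by decide : (7:ZMod 18) ≠ 13)]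
    rw [show ZMod.val (7 : ZMod 18) = 7 by decide, show ZMod.val (13 : ZMod 18) = 13 by decide]
    norm_num
    rw [hred, hred]
    have key : ∀ j' : Fin 18, Nat.Coprime (j' : ℕ) 18 →
        18 ≤ ((j' : ℕ) * 6) % 18 + ((j' : ℕ) * 12) % 18 := by decide
    exact key ⟨j % 18, hlt⟩ hj'

lemma isRoot_charpoly_of_eig {V : Type} [AddCommGroup V] [Module ℂ V]
    [Module.Finite ℂ V] [Module.Free ℂ V] (f : Module.End ℂ V) (μ : ℂ) (v : V)
    (hv : v ≠ 0) (h : f v = μ • v) : (LinearMap.charpoly f).IsRoot μ := by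
  have hE : f.HasEigenvalue μ :=
    Module.End.hasEigenvalue_of_hasEigenvector ⟨Module.End.mem_eigenspace_iff.mpr h, hv⟩
  have h1 : (minpoly ℂ f).IsRoot μ := Module.End.hasEigenvalue_iff_isRoot.mp hE
  have h2 : minpoly ℂ f ∣ LinearMap.charpoly f := minpoly.dvd _ _ (f.aeval_self_charpoly)
  exact h1.dvd h2

lemma minpoly_deg_bound (K : IntermediateField ℚ ℂ) [FiniteDimensional ℚ ↥K]
    (hfr : Module.finrank ℚ ↥K = 2) (α : ℂ) (hint : IsIntegral ℚ α) :
    (minpoly ℚ α).natDegree ≤ 2 * (minpoly ↥K α).natDegree := by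
  have hintK : IsIntegral ↥K α := hint.tower_top
  set L : IntermediateField ↥K ℂ := IntermediateField.adjoin ↥K {α} with hL
  haveI : FiniteDimensional ↥K ↥L := IntermediateField.adjoin.finiteDimensional hintK
  haveI : FiniteDimensional ℚ ↥L := FiniteDimensional.trans ℚ ↥K ↥L
  have hd : Module.finrank ↥K ↥L = (minpoly ↥K α).natDegree :=
    IntermediateField.adjoin.finrank hintK
  have hmem : α ∈ L := IntermediateField.mem_adjoin_simple_self ↥K α
  set αL : ↥L := ⟨α, hmem⟩ with hαL
  have hminp : minpoly ℚ α = minpoly ℚ αL := by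
    have := minpoly.algebraMap_eq (A := ℚ) (B := ↥L) (B' := ℂ)
      (algebraMap ↥L ℂ).injective αL
    rw [← this]; rfl
  rw [hminp]
  calc (minpoly ℚ αL).natDegree ≤ Module.finrank ℚ ↥L := minpoly.natDegree_le αL
    _ = 2 * (minpoly ↥K α).natDegree := by
        rw [← hd, ← hfr]; exact (Module.finrank_mul_finrank ℚ ↥K ↥L).symm

theorem stmt4
    (n : ℕ) (hn : 1 ≤ n)
    (D : ℤ) (hD : D < 0) (hDsf : Squarefree D)
    (δ : ℂ) (hδ : δ ^ 2 = (D : ℂ))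
    (K : IntermediateField ℚ ℂ) (hK : K = IntermediateField.adjoin ℚ {δ})
    (H : Matrix (Fin (n + 1)) (Fin (n + 1)) ℂ)
    (hHK : ∀ i j, H i j ∈ K ∧ IsIntegral ℤ (H i j))
    (hHherm : H.IsHermitian)
    (hsig : ∃ P : Matrix (Fin (n + 1)) (Fin (n + 1)) ℂ, IsUnit P.det ∧
      Pᴴ * H * P = Matrix.diagonal (fun i => if i = Fin.last n then (-1 : ℂ) else 1))
    (UΛ : Subgroup (GL (Fin (n + 1)) ℂ))
    (hUΛ : ∀ g : GL (Fin (n + 1)) ℂ, g ∈ UΛ ↔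
      ((∀ i j, (g : Matrix (Fin (n + 1)) (Fin (n + 1)) ℂ) i j ∈ K ∧
          IsIntegral ℤ ((g : Matrix (Fin (n + 1)) (Fin (n + 1)) ℂ) i j)) ∧
       (∀ i j, ((g⁻¹ : GL (Fin (n + 1)) ℂ) : Matrix (Fin (n + 1)) (Fin (n + 1)) ℂ) i j ∈ K ∧
          IsIntegral ℤ (((g⁻¹ : GL (Fin (n + 1)) ℂ) : Matrix (Fin (n + 1)) (Fin (n + 1)) ℂ) i j)) ∧
       (g : Matrix (Fin (n + 1)) (Fin (n + 1)) ℂ)ᴴ * H *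
          (g : Matrix (Fin (n + 1)) (Fin (n + 1)) ℂ) = H))
    (Γ : Subgroup (GL (Fin (n + 1)) ℂ)) (hΓ : Γ ≤ UΛ) (hfin : Γ.relIndex UΛ ≠ 0)
    (ω : Fin (n + 1) → ℂ) (hω : (star ω ⬝ᵥ H.mulVec ω).re < 0)
    (W : Submodule ℂ (Fin (n + 1) → ℂ)) (hW : W = Submodule.span ℂ {ω})
    (g : GL (Fin (n + 1)) ℂ) (hgΓ : g ∈ Γ) (hgfin : IsOfFinOrder g)
    (α : ℂ) (hα : (g : Matrix (Fin (n + 1)) (Fin (n + 1)) ℂ).mulVec ω = α • ω)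
    (hgW : ∀ x ∈ W, (g : Matrix (Fin (n + 1)) (Fin (n + 1)) ℂ).mulVec x ∈ W)
    (ρ : Module.End ℂ (W →ₗ[ℂ] ((Fin (n + 1) → ℂ) ⧸ W)))
    (hρ : ∀ (φ : W →ₗ[ℂ] ((Fin (n + 1) → ℂ) ⧸ W)) (x : W) (yrep : Fin (n + 1) → ℂ),
      φ x = Submodule.Quotient.mk yrep →
      ρ φ ⟨(g : Matrix (Fin (n + 1)) (Fin (n + 1)) ℂ).mulVec x, hgW x x.2⟩ =
        Submodule.Quotient.mk ((g : Matrix (Fin (n + 1)) (Fin (n + 1)) ℂ).mulVec yrep))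
    (hnid : ρ ≠ 1) (hnqr : ¬ IsQuasiReflection ρ)
    (r : ℕ) (hr : r = orderOf α)
    (hr916 : r = 9 ∨ r = 16 ∨ r = 18) :
    1 ≤ reidTaiSum ρ := by
  classical
  -- ω is nonzero
  have hω0 : ω ≠ 0 := by
    intro h
    rw [h] at hω
    simp at hω
  set gC : Matrix (Fin (n+1)) (Fin (n+1)) ℂ := (g : Matrix (Fin (n+1)) (Fin (n+1)) ℂ) with hgC
  -- α is a primitive r-th root of unity
  have hαpow : ∀ m : ℕ, (gC ^ m).mulVec ω = (α ^ m) • ω := by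
    intro m
    induction m with
    | zero => simp [Matrix.one_mulVec]
    | succ i ih =>
        rw [pow_succ, pow_succ, ← Matrix.mulVec_mulVec, hα, Matrix.mulVec_smul, ih,
          smul_smul, mul_comm]
  have hαfin : IsOfFinOrder α := by
    obtain ⟨m, hm0, hm1⟩ := hgfin.exists_pow_eq_one
    refine (isOfFinOrder_iff_pow_eq_one).mpr ⟨m, hm0, ?_⟩
    have h1 : (gC ^ m) = (1 : Matrix (Fin (n+1)) (Fin (n+1)) ℂ) := by
      rw [hgC, ← Units.val_pow_eq_pow_val, hm1, Units.val_one]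
    have := hαpow m
    rw [h1, Matrix.one_mulVec] at this
    have h2 : (α ^ m - 1) • ω = 0 := by
      rw [sub_smul, one_smul, ← this, sub_self]
    rcases smul_eq_zero.mp h2 with h | h
    · exact sub_eq_zero.mp h
    · exact absurd h hω0
  have hr0 : r ≠ 0 := by rcases hr916 with h|h|h <;> omega
  have hr9 : 2 ≤ r := by rcases hr916 with h|h|h <;> omega
  haveI : NeZero r := ⟨hr0⟩
  have hαr : α ^ r = 1 := by rw [hr]; exact pow_orderOf_eq_one α
  have hα0 : α ≠ 0 := by
    intro h
    rw [h, zero_pow hr0] at hαr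
    exact zero_ne_one hαr
  have hprim : IsPrimitiveRoot α r := by
    rw [hr]; exact IsPrimitiveRoot.orderOf α
  obtain ⟨j, hjr, hjcop, hje⟩ := (Complex.isPrimitiveRoot_iff α r hr0).mp hprim
  -- the matrix over K
  have hgmem := (hUΛ g).mp (hΓ hgΓ)
  set gK : Matrix (Fin (n+1)) (Fin (n+1)) ↥K :=
    fun i j' => ⟨gC i j', (hgmem.1 i j').1⟩ with hgK
  have hmap : gK.map (algebraMap ↥K ℂ) = gC := by
    ext i j'
    rfl
  -- α is integral
  have hαint : IsIntegral ℚ α := by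
    refine ⟨X ^ r - 1, ?_, ?_⟩
    · apply Polynomial.monic_X_pow_sub_C (1:ℚ) hr0
    · simp [hαr]
  have hαintK : IsIntegral ↥K α := hαint.tower_top
  set p : Polynomial ↥K := minpoly ↥K α with hp
  set pC : Polynomial ℂ := p.map (algebraMap ↥K ℂ) with hpC
  have hpC0 : pC ≠ 0 := by
    apply Polynomial.map_ne_zero
    exact minpoly.ne_zero hαintK
  -- eval of charpoly is a determinant
  have heval : ∀ β : ℂ, (gC.charpoly).eval β
      = (β • (1 : Matrix (Fin (n+1)) (Fin (n+1)) ℂ) - gC).det := by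
    intro β
    rw [Matrix.charpoly, _root_.eval_det, Matrix.matPolyEquiv_charmatrix]
    congr 1
    rw [Polynomial.eval_sub, Polynomial.eval_X, Polynomial.eval_C]
    congr 1
    simp [Matrix.scalar, Matrix.smul_eq_diagonal_mul]
  -- α is a root of the charpoly of gK
  have hαroot : (Polynomial.aeval α) gK.charpoly = 0 := by
    rw [Polynomial.aeval_def, ← Polynomial.eval_map, ← Matrix.charpoly_map, hmap, heval]
    apply Matrix.exists_mulVec_eq_zero_iff.mp
    refine ⟨ω, hω0, ?_⟩
    rw [Matrix.sub_mulVec, Matrix.smul_mulVec, Matrix.one_mulVec, hα, sub_self]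
  have hpdvd : p ∣ gK.charpoly := minpoly.dvd ↥K α hαroot
  have hpcyc : p ∣ Polynomial.cyclotomic r ↥K := by
    apply minpoly.dvd ↥K α
    have h1 : (Polynomial.cyclotomic r ↥K).map (algebraMap ↥K ℂ) = Polynomial.cyclotomic r ℂ :=
      Polynomial.map_cyclotomic r _
    rw [Polynomial.aeval_def, ← Polynomial.eval_map, h1]
    exact (hprim.isRoot_cyclotomic (by omega))
  have hpCdvd : pC ∣ gC.charpoly := by
    rw [← hmap, Matrix.charpoly_map]
    exact Polynomial.map_dvd _ hpdvd
  have hpCcyc : pC ∣ Polynomial.cyclotomic r ℂ := by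
    have := Polynomial.map_dvd (algebraMap ↥K ℂ) hpcyc
    rwa [Polynomial.map_cyclotomic] at this
  -- the exponent set T
  set T : Finset (ZMod r) :=
    Finset.univ.filter (fun k : ZMod r => pC.IsRoot (α ^ (ZMod.val k))) with hT
  have hT_mem : ∀ k : ZMod r, k ∈ T ↔ pC.IsRoot (α ^ (ZMod.val k)) := by
    intro k
    rw [hT, Finset.mem_filter]
    simp
  have hpCα : pC.IsRoot α := by
    rw [hpC, Polynomial.IsRoot, Polynomial.eval_map, ← Polynomial.aeval_def]
    exact minpoly.aeval ↥K α
  have h1T : (1 : ZMod r) ∈ T := by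
    rw [hT_mem, ZMod.val_one_eq_one_mod]
    rw [Nat.mod_eq_of_lt hr9, pow_one]
    exact hpCα
  have hpow_mod : ∀ a : ℕ, α ^ a = α ^ (a % r) := by
    intro a
    conv_lhs => rw [← Nat.div_add_mod a r]
    rw [pow_add, pow_mul, hαr, one_pow, one_mul]
  -- roots of pC are primitive r-th roots of unity
  have hroots_prim : ∀ β : ℂ, pC.IsRoot β → IsPrimitiveRoot β r := by
    intro β hβ
    rw [← Polynomial.isRoot_cyclotomic_iff (R := ℂ) (n := r)]
    exact hβ.dvd hpCcyc
  have hTunit : ∀ k ∈ T, (ZMod.val k).Coprime r := by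
    intro k hk
    have h2 := hroots_prim _ ((hT_mem k).mp hk)
    exact (hprim.pow_iff_coprime (by omega) _).mp h2
  -- multiplicative closure of T
  have hTmul : ∀ k₁ ∈ T, ∀ k₂ ∈ T, k₁ * k₂ ∈ T := by
    intro k₁ hk₁ k₂ hk₂
    rw [hT_mem] at hk₁ hk₂ ⊢
    set q : Polynomial ↥K := p.comp (Polynomial.X ^ (ZMod.val k₂)) with hq
    have hqα : (Polynomial.aeval α) q = 0 := by
      rw [hq, Polynomial.aeval_comp]
      simp only [map_pow, Polynomial.aeval_X]
      rw [Polynomial.aeval_def, ← Polynomial.eval_map, ← hpC]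
      exact hk₂
    have hpq : p ∣ q := minpoly.dvd ↥K α hqα
    have hqC : pC ∣ q.map (algebraMap ↥K ℂ) := Polynomial.map_dvd _ hpq
    have hroot : (q.map (algebraMap ↥K ℂ)).IsRoot (α ^ (ZMod.val k₁)) := by
      apply Polynomial.IsRoot.dvd _ hqC
      exact hk₁
    rw [hq, Polynomial.map_comp, Polynomial.map_pow, Polynomial.map_X] at hroot
    rw [Polynomial.IsRoot, Polynomial.eval_comp, Polynomial.eval_pow, Polynomial.eval_X] at hroot
    rw [← pow_mul, ← hpC] at hroot
    have hmodeq : α ^ (ZMod.val k₁ * ZMod.val k₂) = α ^ (ZMod.val (k₁ * k₂)) := by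
      rw [ZMod.val_mul, ← hpow_mod]
    rwa [hmodeq] at hroot
  -- finite dimensionality and degree bound
  have hδint : IsIntegral ℚ δ := by
    refine ⟨Polynomial.X ^ 2 - Polynomial.C ((D : ℚ)), ?_, ?_⟩
    · apply Polynomial.monic_X_pow_sub_C _ (by norm_num)
    · rw [← Polynomial.aeval_def, map_sub, map_pow, Polynomial.aeval_X, Polynomial.aeval_C,
        eq_ratCast, hδ]
      push_cast
      ring
  haveI hKfd : FiniteDimensional ℚ ↥K := by
    rw [hK]
    exact IntermediateField.adjoin.finiteDimensional hδint
  have hδdeg : (minpoly ℚ δ).natDegree = 2 := by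
    have hle : (minpoly ℚ δ).natDegree ≤ 2 := by
      have hdvd : minpoly ℚ δ ∣ Polynomial.X ^ 2 - Polynomial.C ((D : ℚ)) := by
        apply minpoly.dvd
        rw [map_sub, map_pow, Polynomial.aeval_X, Polynomial.aeval_C, eq_ratCast, hδ]
        push_cast; ring
      have h2 : (Polynomial.X ^ 2 - Polynomial.C ((D : ℚ))).natDegree = 2 :=
        Polynomial.natDegree_X_pow_sub_C
      have hne : (Polynomial.X ^ 2 - Polynomial.C ((D : ℚ))) ≠ 0 :=
        Polynomial.X_pow_sub_C_ne_zero (by norm_num) _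
      calc (minpoly ℚ δ).natDegree ≤ _ := Polynomial.natDegree_le_of_dvd hdvd hne
        _ = 2 := h2
    have hge : 2 ≤ (minpoly ℚ δ).natDegree := by
      rw [minpoly.two_le_natDegree_iff hδint]
      rintro ⟨q, hq⟩
      have hq2 : ((q^2 : ℚ) : ℂ) = ((D:ℚ) : ℂ) := by
        push_cast
        rw [show ((q:ℚ):ℂ) = algebraMap ℚ ℂ q from rfl, hq, hδ]
      have hq3 : (q^2 : ℚ) = (D : ℚ) := by exact_mod_cast hq2
      have hD' : (D : ℚ) < 0 := by exact_mod_cast hD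
      nlinarith [sq_nonneg q]
    omega
  have hKfr : Module.finrank ℚ ↥K = 2 := by
    rw [hK, IntermediateField.adjoin.finrank hδint, hδdeg]
  -- cardinality of T
  have hsep : pC.Separable := by
    apply Polynomial.Separable.of_dvd _ (dvd_trans hpCcyc (Polynomial.cyclotomic.dvd_X_pow_sub_one r ℂ))
    have := Polynomial.separable_X_pow_sub_C (1 : ℂ) (by exact_mod_cast hr0) one_ne_zero
    simpa using this
  have hnodup : pC.roots.Nodup := Polynomial.nodup_roots hsep
  have hd_map : pC.natDegree = p.natDegree := (minpoly.monic hαintK).natDegree_map _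
  have hcard_roots : pC.roots.card = pC.natDegree := by
    have hsp : pC.Splits := IsAlgClosed.splits pC
    have h3 := hsp.natDegree_eq_card_roots
    exact h3.symm
  have hsub_im : pC.roots.toFinset ⊆ T.image (fun k => α ^ (ZMod.val k)) := by
    intro β hβ
    have hβroot : pC.IsRoot β := Polynomial.isRoot_of_mem_roots (Multiset.mem_toFinset.mp hβ)
    have hβprim := hroots_prim β hβroot
    obtain ⟨i, hi, hie⟩ := hprim.eq_pow_of_pow_eq_one hβprim.pow_eq_one
    refine Finset.mem_image.mpr ⟨(i : ZMod r), ?_, ?_⟩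
    · rw [hT_mem, ZMod.val_cast_of_lt hi, hie]
      exact hβroot
    · rw [ZMod.val_cast_of_lt hi, hie]
  have hdT : p.natDegree ≤ T.card := by
    calc p.natDegree = pC.roots.card := by rw [hcard_roots, hd_map]
      _ = pC.roots.toFinset.card := (Multiset.toFinset_card_of_nodup hnodup).symm
      _ ≤ (T.image (fun k => α ^ (ZMod.val k))).card := Finset.card_le_card hsub_im
      _ ≤ T.card := Finset.card_image_le
  have htot : Nat.totient r ≤ 2 * T.card := by
    have h1 : Nat.totient r = (minpoly ℚ α).natDegree := by
      rw [← Polynomial.cyclotomic_eq_minpoly_rat hprim (by omega), Polynomial.natDegree_cyclotomic]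
    have h2 := minpoly_deg_bound K hKfr α hαint
    rw [← hp] at h2
    omega
  -- the span equivalence
  have hωW : ω ∈ W := by rw [hW]; exact Submodule.mem_span_singleton_self ω
  set e : ℂ ≃ₗ[ℂ] ↥W :=
    (LinearEquiv.toSpanNonzeroSingleton ℂ (Fin (n+1) → ℂ) ω hω0).trans
      (LinearEquiv.ofEq _ _ hW.symm) with he
  have he_apply : ∀ c : ℂ, ((e c : ↥W) : Fin (n+1) → ℂ) = c • ω := by
    intro c; rfl
  have hx_repr : ∀ x : ↥W, (x : Fin (n+1) → ℂ) = (e.symm x) • ω := by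
    intro x
    conv_lhs => rw [← e.apply_symm_apply x]
    rw [he_apply]
  have hgx : ∀ x : ↥W, gC.mulVec (x : Fin (n+1) → ℂ) = α • (x : Fin (n+1) → ℂ) := by
    intro x
    conv_lhs => rw [hx_repr x]
    conv_rhs => rw [hx_repr x]
    rw [Matrix.mulVec_smul, hα, smul_smul, smul_smul, mul_comm]
  -- main eigenvalue extraction
  have hρroot : ∀ k ∈ T.erase 1,
      (LinearMap.charpoly ρ).IsRoot (α⁻¹ * α ^ (ZMod.val k)) := by
    intro k hk
    obtain ⟨hk1, hkT⟩ := Finset.mem_erase.mp hk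
    set β : ℂ := α ^ (ZMod.val k) with hβ
    have hβroot : pC.IsRoot β := (hT_mem k).mp hkT
    have hβα : β ≠ α := by
      intro h
      apply hk1
      have hv1 : ZMod.val k = 1 :=
        hprim.pow_inj (ZMod.val_lt k) (by omega : 1 < r) (by rw [← hβ, h, pow_one])
      have h2 := ZMod.natCast_val (R := ZMod r) k
      rw [hv1, ZMod.cast_id] at h2
      rw [← h2]
      norm_num
    have hdet : (β • (1 : Matrix (Fin (n+1)) (Fin (n+1)) ℂ) - gC).det = 0 := by
      rw [← heval]
      exact hβroot.dvd hpCdvd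
    obtain ⟨v, hv0, hvker⟩ := Matrix.exists_mulVec_eq_zero_iff.mpr hdet
    have hgv : gC.mulVec v = β • v := by
      rw [Matrix.sub_mulVec, Matrix.smul_mulVec, Matrix.one_mulVec] at hvker
      exact (sub_eq_zero.mp hvker).symm
    have hvW : v ∉ W := by
      intro hvWmem
      have h1 : gC.mulVec v = α • v := hgx ⟨v, hvWmem⟩
      rw [hgv] at h1
      have h2 : (β - α) • v = 0 := by rw [sub_smul, h1, sub_self]
      rcases smul_eq_zero.mp h2 with h | h
      · exact hβα (sub_eq_zero.mp h)
      · exact hv0 h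
    set φv : ↥W →ₗ[ℂ] ((Fin (n+1) → ℂ) ⧸ W) :=
      W.mkQ.comp ((LinearMap.toSpanSingleton ℂ _ v).comp e.symm.toLinearMap) with hφv
    have hφv_apply : ∀ x : ↥W, φv x = Submodule.Quotient.mk ((e.symm x) • v) := by
      intro x; rfl
    have hφv0 : φv ≠ 0 := by
      intro h0
      have h1 : φv ⟨ω, hωW⟩ = 0 := by rw [h0]; rfl
      rw [hφv_apply] at h1
      have h2 : e.symm ⟨ω, hωW⟩ = 1 := by
        apply e.injective
        rw [e.apply_symm_apply]
        apply Subtype.ext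
        rw [he_apply, one_smul]
      rw [h2, one_smul] at h1
      exact hvW ((Submodule.Quotient.mk_eq_zero W).mp h1)
    have hρeq : ρ φv = (α⁻¹ * β) • φv := by
      apply LinearMap.ext
      intro x
      set x' : ↥W := α⁻¹ • x with hx'
      have hgx' : (⟨gC.mulVec (x' : Fin (n+1) → ℂ), hgW _ x'.2⟩ : ↥W) = x := by
        apply Subtype.ext
        show gC.mulVec (x' : Fin (n+1) → ℂ) = (x : Fin (n+1) → ℂ)
        rw [hgx x', hx']
        rw [Submodule.coe_smul, smul_smul, mul_inv_cancel₀ hα0, one_smul]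
      have happ := hρ φv x' ((e.symm x') • v) (hφv_apply x')
      rw [hgx'] at happ
      rw [happ]
      rw [LinearMap.smul_apply, hφv_apply x, Matrix.mulVec_smul, hgv]
      rw [hx', _root_.map_smul]
      congr 1
      simp only [smul_smul, smul_eq_mul]
      ring_nf
    exact isRoot_charpoly_of_eig ρ (α⁻¹ * β) φv hφv0 hρeq
  -- ζ and the values of unitFrac on powers of α
  set ζ : ℂ := Complex.exp (2 * Real.pi * Complex.I / r) with hζ
  have hζprim : IsPrimitiveRoot ζ r := Complex.isPrimitiveRoot_exp r hr0
  have hζr : ζ ^ r = 1 := hζprim.pow_eq_one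
  have hζj : ζ ^ j = α := by
    rw [← hje, hζ, ← Complex.exp_nat_mul]
    congr 1
    push_cast
    ring
  have hval : ∀ m : ℕ, unitFrac (α ^ m) = (((j * m) % r : ℕ) : ℝ) / r := by
    intro m
    have h1 : α ^ m = ζ ^ ((j * m) % r) := by
      rw [← hζj, ← pow_mul]
      conv_lhs => rw [← Nat.div_add_mod (j*m) r]
      rw [pow_add, pow_mul, hζr, one_pow, one_mul]
    have h2 : ζ ^ ((j*m) % r)
        = Complex.exp (2 * Real.pi * Complex.I * ((((j*m) % r : ℕ) : ℂ) / r)) := by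
      rw [hζ, ← Complex.exp_nat_mul]
      congr 1
      push_cast
      ring
    rw [h1, h2, unitFrac_exp _ _ (Nat.mod_lt _ (by omega))]
  -- the set of exhibited eigenvalues
  set S : Finset ℂ := (T.erase 1).image (fun k => α ^ (ZMod.val k - 1)) with hS
  have hval_ge1 : ∀ k ∈ T.erase 1, 1 ≤ ZMod.val k := by
    intro k hk
    obtain ⟨hk1, hkT⟩ := Finset.mem_erase.mp hk
    have hcop := hTunit k hkT
    rcases Nat.eq_zero_or_pos (ZMod.val k) with h0 | h0
    · rw [h0, Nat.coprime_zero_left] at hcop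
      omega
    · omega
  have hSroot : ∀ z ∈ S, (LinearMap.charpoly ρ).IsRoot z := by
    intro z hz
    obtain ⟨k, hk, rfl⟩ := Finset.mem_image.mp hz
    have h1 := hρroot k hk
    have h2 : α⁻¹ * α ^ (ZMod.val k) = α ^ (ZMod.val k - 1) := by
      have hv := hval_ge1 k hk
      conv_lhs => rw [show ZMod.val k = (ZMod.val k - 1) + 1 by omega]
      rw [pow_succ, mul_comm (α ^ (ZMod.val k - 1)) α, ← mul_assoc, inv_mul_cancel₀ hα0, one_mul]
    rwa [h2] at h1
  have hcp0 : LinearMap.charpoly ρ ≠ 0 := (LinearMap.charpoly_monic ρ).ne_zero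
  have hSsub : S ⊆ (LinearMap.charpoly ρ).roots.toFinset := by
    intro z hz
    rw [Multiset.mem_toFinset, Polynomial.mem_roots hcp0]
    exact hSroot z hz
  -- summation chain
  have hsum1 : ∑ z ∈ (LinearMap.charpoly ρ).roots.toFinset, unitFrac z ≤ reidTaiSum ρ := by
    rw [reidTaiSum, Finset.sum_eq_multiset_sum, Multiset.toFinset_val]
    obtain ⟨u, hu⟩ := Multiset.le_iff_exists_add.mp ((LinearMap.charpoly ρ).roots.dedup_le)
    conv_rhs => rw [hu, Multiset.map_add, Multiset.sum_add]
    have h0 : 0 ≤ (u.map unitFrac).sum := by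
      apply Multiset.sum_nonneg
      intro x hx
      obtain ⟨y, _, rfl⟩ := Multiset.mem_map.mp hx
      exact unitFrac_nonneg y
    linarith
  have hsum2 : ∑ z ∈ S, unitFrac z ≤ ∑ z ∈ (LinearMap.charpoly ρ).roots.toFinset, unitFrac z :=
    Finset.sum_le_sum_of_subset_of_nonneg hSsub (fun z _ _ => unitFrac_nonneg z)
  have hsum3 : ∑ z ∈ S, unitFrac z = ∑ k ∈ T.erase 1, unitFrac (α ^ (ZMod.val k - 1)) := by
    rw [hS]
    apply Finset.sum_image
    intro k₁ hk₁ k₂ hk₂ hkk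
    have hv₁ := hval_ge1 k₁ hk₁
    have hv₂ := hval_ge1 k₂ hk₂
    have h1 : ZMod.val k₁ - 1 = ZMod.val k₂ - 1 :=
      hprim.pow_inj (lt_of_le_of_lt (Nat.sub_le _ _) (ZMod.val_lt k₁))
        (lt_of_le_of_lt (Nat.sub_le _ _) (ZMod.val_lt k₂)) hkk
    have hvv : ZMod.val k₁ = ZMod.val k₂ := by omega
    have e₁ := ZMod.natCast_val (R := ZMod r) k₁
    have e₂ := ZMod.natCast_val (R := ZMod r) k₂
    rw [ZMod.cast_id] at e₁ e₂
    rw [← e₁, ← e₂, hvv]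
  have hsum4 : ∑ k ∈ T.erase 1, unitFrac (α ^ (ZMod.val k - 1))
      = ((∑ k ∈ T.erase 1, (j * (ZMod.val k - 1)) % r : ℕ) : ℝ) / r := by
    push_cast
    rw [Finset.sum_div]
    apply Finset.sum_congr rfl
    intro k hk
    rw [hval (ZMod.val k - 1)]
  have hfinal := sum_mod_lemma r hr916 j hjcop T h1T hTunit hTmul htot
  have hrR : (0:ℝ) < r := by
    have : (0:ℕ) < r := by omega
    exact_mod_cast this
  have hlast : (1:ℝ) ≤ ((∑ k ∈ T.erase 1, (j * (ZMod.val k - 1)) % r : ℕ) : ℝ) / r := by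
    rw [le_div_iff₀ hrR, one_mul]
    exact_mod_cast hfinal
  rw [hsum4] at hsum3
  linarith
end

section
/- Let d > 2 be an integer and suppose the d-th cyclotomic polynomial Φ_d is reducible over K, with factorisation Φ_d = P'·P'' into monic irreducible polynomials over K. Then complex conjugation interchanges the two factors' root sets: a complex number λ is a root of P' if and only if its complex conjugate λ̄ is a root of P''. -/
/-!
STATEMENT 11.
`K = ℚ(√D) ⊆ ℂ` imaginary quadratic (`D < 0` squarefree), `d > 2`, and the `d`-th
cyclotomic polynomial reducible over `K`, factored as `Φ_d = P₁ * P₂` with `P₁, P₂`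
monic irreducible over `K`.  Then complex conjugation interchanges the two root
sets: `λ` is a root of `P₁` iff `conj λ` is a root of `P₂`.
-/

open Polynomial



lemma conj_delta {D : ℤ} (hD : D < 0) {δ : ℂ} (hδ : δ ^ 2 = (D : ℂ)) :
    (starRingEnd ℂ) δ = -δ := by
  have hsq : ((starRingEnd ℂ) δ) ^ 2 = δ ^ 2 := by
    rw [← map_pow, hδ, map_intCast]
  have h0 : ((starRingEnd ℂ) δ - δ) * ((starRingEnd ℂ) δ + δ) = 0 := by
    linear_combination hsq
  rcases mul_eq_zero.mp h0 with h | h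
  · exfalso
    have heq : (starRingEnd ℂ) δ = δ := by linear_combination h
    have hre : δ = (δ.re : ℂ) := (Complex.conj_eq_iff_re.mp heq).symm
    have : (D : ℂ) = ((δ.re ^ 2 : ℝ) : ℂ) := by
      rw [← hδ]; nth_rewrite 1 [hre]; push_cast; ring
    have hDr : (D : ℝ) = δ.re ^ 2 := by
      exact_mod_cast this
    have : (D : ℝ) < 0 := by exact_mod_cast hD
    nlinarith [sq_nonneg δ.re]
  · linear_combination h

lemma conj_mem {D : ℤ} (hD : D < 0) {δ : ℂ} (hδ : δ ^ 2 = (D : ℂ))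
    {K : IntermediateField ℚ ℂ} (hK : K = IntermediateField.adjoin ℚ {δ}) :
    ∀ x ∈ K, (starRingEnd ℂ) x ∈ K := by
  intro x hx
  set f : ℂ →ₐ[ℚ] ℂ := (starRingEnd ℂ).toRatAlgHom with hf
  have hfδ : f δ = -δ := conj_delta hD hδ
  have hmap : K.map f = K := by
    rw [hK, IntermediateField.adjoin_map]
    have himg : f '' {δ} = {-δ} := by
      rw [Set.image_singleton, hfδ]
    rw [himg]
    apply le_antisymm
    · rw [IntermediateField.adjoin_simple_le_iff]
      exact neg_mem (IntermediateField.mem_adjoin_simple_self ℚ δ)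
    · rw [IntermediateField.adjoin_simple_le_iff]
      have := neg_mem (IntermediateField.mem_adjoin_simple_self ℚ (-δ))
      rwa [neg_neg] at this
  have : f x ∈ K.map f := ⟨x, hx, rfl⟩
  rwa [hmap] at this

lemma real_mem_rat {D : ℤ} (hD : D < 0) {δ : ℂ} (hδ : δ ^ 2 = (D : ℂ))
    {x : ℂ} (hx : x ∈ IntermediateField.adjoin ℚ {δ})
    (hc : (starRingEnd ℂ) x = x) : ∃ q : ℚ, x = (q : ℂ) := by
  have hδ0 : δ ≠ 0 := by
    intro h
    rw [h] at hδ
    have : (D : ℂ) = 0 := by rw [← hδ]; ring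
    have : D = 0 := by exact_mod_cast this
    omega
  -- δ is integral over ℚ
  set g : ℚ[X] := X ^ 2 - C ((D : ℚ)) with hg
  have hgmonic : g.Monic := monic_X_pow_sub_C _ (by norm_num)
  have hgeval : Polynomial.aeval δ g = 0 := by
    simp [hg, hδ]
  have hint : IsIntegral ℚ δ := ⟨g, hgmonic, hgeval⟩
  have hsub : (IntermediateField.adjoin ℚ {δ}).toSubalgebra = Algebra.adjoin ℚ {δ} :=
    IntermediateField.adjoin_simple_toSubalgebra_of_isAlgebraic hint.isAlgebraic
  have hx' : x ∈ Algebra.adjoin ℚ ({δ} : Set ℂ) := by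
    rw [← hsub]; exact hx
  rw [Algebra.adjoin_singleton_eq_range_aeval] at hx'
  obtain ⟨p, hp⟩ := hx'
  set r : ℚ[X] := p %ₘ g with hr
  have hxr : Polynomial.aeval δ r = x := by
    have hdiv := Polynomial.modByMonic_add_div p g
    have : Polynomial.aeval δ p = x := hp
    rw [← hdiv] at this
    simpa [hgeval] using this
  have hdeg : r.degree < 2 := by
    have := degree_modByMonic_lt p hgmonic
    rwa [hg, degree_X_pow_sub_C (by norm_num) _] at this
  have hdeg1 : r.degree ≤ 1 := by
    rcases lt_or_ge r.degree 2 with h | h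
    · exact Order.le_of_lt_succ (by exact_mod_cast hdeg)
    · exact absurd hdeg (not_lt.mpr h)
  have hrform : r = C (r.coeff 1) * X + C (r.coeff 0) :=
    Polynomial.eq_X_add_C_of_degree_le_one hdeg1
  have hxval : x = (r.coeff 1 : ℂ) * δ + (r.coeff 0 : ℂ) := by
    rw [← hxr]
    nth_rewrite 1 [hrform]
    simp
  have hconj : (r.coeff 1 : ℂ) * (-δ) + (r.coeff 0 : ℂ) = (r.coeff 1 : ℂ) * δ + (r.coeff 0 : ℂ) := by
    calc (r.coeff 1 : ℂ) * (-δ) + (r.coeff 0 : ℂ)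
        = (starRingEnd ℂ) ((r.coeff 1 : ℂ) * δ + (r.coeff 0 : ℂ)) := by
          rw [map_add, map_mul, conj_delta hD hδ, map_ratCast, map_ratCast]
      _ = (r.coeff 1 : ℂ) * δ + (r.coeff 0 : ℂ) := by rw [← hxval, hc, hxval]
  have hc1 : (r.coeff 1 : ℂ) = 0 := by
    have h2 : (2 : ℂ) * (r.coeff 1 : ℂ) * δ = 0 := by linear_combination hconj.symm
    rcases mul_eq_zero.mp h2 with h | h
    · rcases mul_eq_zero.mp h with h' | h'
      · norm_num at h'
      · exact h'
    · exact absurd h hδ0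
  exact ⟨r.coeff 0, by rw [hxval, hc1]; ring⟩

set_option synthInstance.maxHeartbeats 800000
set_option maxHeartbeats 1000000

theorem stmt11
    (D : ℤ) (hD : D < 0) (hDsf : Squarefree D)
    (δ : ℂ) (hδ : δ ^ 2 = (D : ℂ))
    (K : IntermediateField ℚ ℂ) (hK : K = IntermediateField.adjoin ℚ {δ})
    (d : ℕ) (hd : 2 < d)
    (hred : ¬ Irreducible (Polynomial.cyclotomic d K))
    (P₁ P₂ : Polynomial K)
    (hP₁m : P₁.Monic) (hP₂m : P₂.Monic)
    (hP₁i : Irreducible P₁) (hP₂i : Irreducible P₂)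
    (hfact : Polynomial.cyclotomic d K = P₁ * P₂) :
    ∀ z : ℂ, Polynomial.aeval z P₁ = 0 ↔ Polynomial.aeval ((starRingEnd ℂ) z) P₂ = 0 := by
  have hmem : ∀ x ∈ K, (starRingEnd ℂ) x ∈ K := conj_mem hD hδ hK
  -- conjugation as a ring equivalence of K
  let σ : K ≃+* K :=
  { toFun := fun x => ⟨(starRingEnd ℂ) ↑x, hmem ↑x x.2⟩
    invFun := fun x => ⟨(starRingEnd ℂ) ↑x, hmem ↑x x.2⟩
    left_inv := fun x => by ext : 1; simp
    right_inv := fun x => by ext : 1; simp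
    map_mul' := fun x y => by ext : 1; push_cast; simp
    map_add' := fun x y => by ext : 1; push_cast; simp }
  have hσcoe : ∀ x : K, ((σ x : K) : ℂ) = (starRingEnd ℂ) ↑x := fun _ => rfl
  have hcomm : (starRingEnd ℂ).comp (algebraMap K ℂ)
      = (algebraMap K ℂ).comp (σ : K →+* K) := RingHom.ext fun x => rfl
  have heval : ∀ (P : Polynomial K) (z : ℂ),
      (starRingEnd ℂ) (Polynomial.aeval z P)
        = Polynomial.aeval ((starRingEnd ℂ) z) (P.map (σ : K →+* K)) := by
    intro P z
    rw [Polynomial.aeval_def, Polynomial.aeval_def, Polynomial.eval₂_map,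
      Polynomial.hom_eval₂, hcomm]
  have hmapcyc : (Polynomial.cyclotomic d K).map (σ : K →+* K) = Polynomial.cyclotomic d K :=
    Polynomial.map_cyclotomic _ _
  have hfact2 : Polynomial.cyclotomic d K
      = P₁.map (σ : K →+* K) * P₂.map (σ : K →+* K) := by
    rw [← hmapcyc, hfact, Polynomial.map_mul]
  have hmapeq : ∀ P : Polynomial K, (Polynomial.mapEquiv σ) P = P.map (σ : K →+* K) := fun _ => rfl
  have hP₁σi : Irreducible (P₁.map (σ : K →+* K)) := by
    rw [← hmapeq]
    exact (MulEquiv.irreducible_iff (Polynomial.mapEquiv σ).toMulEquiv).mpr hP₁i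
  have hP₁σm : (P₁.map (σ : K →+* K)).Monic := hP₁m.map _
  -- exclude the fixed case
  have hne : P₁.map (σ : K →+* K) ≠ P₁ := by
    intro h
    have hcf : ∀ n, P₁.coeff n ∈ Set.range (algebraMap ℚ K) := by
      intro n
      have h1 : (σ : K →+* K) (P₁.coeff n) = P₁.coeff n := by
        rw [← Polynomial.coeff_map, h]
      have h2 : (starRingEnd ℂ) ↑(P₁.coeff n) = ↑(P₁.coeff n) :=
        congrArg Subtype.val h1
      have h3 : (↑(P₁.coeff n) : ℂ) ∈ IntermediateField.adjoin ℚ {δ} := by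
        rw [← hK]; exact (P₁.coeff n).2
      obtain ⟨q, hq⟩ := real_mem_rat hD hδ h3 h2
      refine ⟨q, ?_⟩
      apply Subtype.ext
      have : ((algebraMap ℚ K q : K) : ℂ) = (q : ℂ) := by
        rw [eq_ratCast (algebraMap ℚ K) q]
        exact map_ratCast (algebraMap K ℂ) q
      rw [this, hq]
    have hlift : P₁ ∈ Polynomial.lifts (algebraMap ℚ K) :=
      (Polynomial.lifts_iff_coeff_lifts P₁).mpr hcf
    obtain ⟨Q, hQmap, _, hQmonic⟩ :=
      Polynomial.lifts_and_degree_eq_and_monic hlift hP₁m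
    have hQdvd : Q ∣ Polynomial.cyclotomic d ℚ := by
      rw [← Polynomial.map_dvd_map (algebraMap ℚ K)
        (algebraMap ℚ K).injective hQmonic]
      rw [hQmap, Polynomial.map_cyclotomic]
      exact ⟨P₂, hfact⟩
    have hcirr : Irreducible (Polynomial.cyclotomic d ℚ) :=
      Polynomial.cyclotomic.irreducible_rat (by omega)
    obtain ⟨e, he⟩ := hQdvd
    have hQnu : ¬ IsUnit Q := by
      intro hu
      exact hP₁i.not_isUnit (by rw [← hQmap]; exact hu.map (Polynomial.mapRingHom (algebraMap ℚ K)))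
    rcases hcirr.isUnit_or_isUnit he with hu | hu
    · exact hQnu hu
    · have hassoc : Associated Q (Polynomial.cyclotomic d ℚ) := by
        obtain ⟨u, hu'⟩ := hu
        exact ⟨u, by rw [he, ← hu']⟩
      have hQeq : Q = Polynomial.cyclotomic d ℚ :=
        Polynomial.eq_of_monic_of_associated hQmonic (Polynomial.cyclotomic.monic d ℚ) hassoc
      have : P₁ = Polynomial.cyclotomic d K := by
        rw [← hQmap, hQeq, Polynomial.map_cyclotomic]
      exact hred (this ▸ hP₁i)
  -- the map of P₁ equals P₂
  have hkey : P₁.map (σ : K →+* K) = P₂ := by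
    have hdvd : P₁.map (σ : K →+* K) ∣ P₁ * P₂ := by
      rw [← hfact, hfact2]
      exact dvd_mul_right _ _
    have hprime : Prime (P₁.map (σ : K →+* K)) :=
      (UniqueFactorizationMonoid.irreducible_iff_prime).mp hP₁σi
    rcases hprime.2.2 P₁ P₂ hdvd with h | h
    · exfalso
      exact hne (Polynomial.eq_of_monic_of_associated hP₁σm hP₁m
        (hP₁σi.associated_of_dvd hP₁i h))
    · exact Polynomial.eq_of_monic_of_associated hP₁σm hP₂m
        (hP₁σi.associated_of_dvd hP₂i h)
  have hkey2 : P₂.map (σ : K →+* K) = P₁ := by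
    rw [← hkey, Polynomial.map_map]
    have : ((σ : K →+* K)).comp (σ : K →+* K) = RingHom.id K := by
      apply RingHom.ext
      intro x
      apply Subtype.ext
      simp [hσcoe]
    rw [this, Polynomial.map_id]
  intro z
  constructor
  · intro h
    have := heval P₁ z
    rw [h, map_zero, hkey] at this
    exact this.symm
  · intro h
    have := heval P₂ ((starRingEnd ℂ) z)
    rw [h, map_zero, hkey2, Complex.conj_conj] at this
    exact this.symm
end

section
/- For a positive integer d, the inequality φ(d)·(φ(d)+2) < 8d (φ Euler's totient), which for even φ(d) is equivalent to Σ_{j=1}^{φ(d)/2} j/d < 1, holds if and only if d belongs to the set {1,2,3,4,5,6,7,8,9,10,12,14,15,16,18,20,22,24,26,28,30,36,40,42,48,54,60,66,84,90}. -/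
set_option maxRecDepth 10000

private def S12 : Finset ℕ := {1, 2, 3, 4, 5, 6, 7, 8, 9, 10, 12, 14, 15, 16, 18, 20, 22, 24, 26, 28,
            30, 36, 40, 42, 48, 54, 60, 66, 84, 90}

private lemma K1 : ∀ m ∈ S12, ∀ p < 722, 2 ≤ p → Nat.Coprime p m →
    8*(p*m) ≤ ((p-1) * Nat.totient m)*((p-1) * Nat.totient m + 2) ∨ p*m ∈ S12 := by decide

private lemma K2 : ∀ m ∈ S12, ∀ p < 91, p ∣ m → 2 ≤ p →
    8*(p*m) ≤ (p * Nat.totient m)*(p * Nat.totient m + 2) ∨ p*m ∈ S12 := by decide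

private lemma Sbound : ∀ m ∈ S12, 0 < m ∧ m ≤ 90 := by decide

private lemma Sineq : ∀ d ∈ S12, Nat.totient d * (Nat.totient d + 2) < 8 * d := by decide

private lemma main12 : ∀ d : ℕ, 0 < d →
    8 * d ≤ Nat.totient d * (Nat.totient d + 2) ∨ d ∈ S12 := by
  intro d
  induction d using Nat.strong_induction_on with
  | _ d IH =>
  intro hd
  rcases eq_or_lt_of_le (show 1 ≤ d from hd) with h1 | h2
  · right; rw [← h1]; decide
  have hne : d.primeFactors.Nonempty := Nat.nonempty_primeFactors.mpr h2
  set p := d.primeFactors.max' hne with hp_def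
  have hpmem : p ∈ d.primeFactors := d.primeFactors.max'_mem hne
  have hmax : ∀ q ∈ d.primeFactors, q ≤ p := fun q hq => d.primeFactors.le_max' q hq
  obtain ⟨hp, hpd, -⟩ := Nat.mem_primeFactors.mp hpmem
  set m := d / p with hm_def
  have hdm : d = p * m := (Nat.mul_div_cancel' hpd).symm
  have hm : 0 < m := Nat.div_pos (Nat.le_of_dvd hd hpd) hp.pos
  have hp2 : 2 ≤ p := hp.two_le
  have hmlt : m < d := by nlinarith
  have H := IH m hmlt hm
  have hmS : m ∈ S12 → 0 < m ∧ m ≤ 90 := Sbound m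
  have ht1 : 0 < Nat.totient m := Nat.totient_pos.mpr hm
  by_cases hpm : p ∣ m
  · -- p divides m
    have htot : Nat.totient d = p * Nat.totient m := by
      rw [hdm, Nat.totient_mul_of_prime_of_dvd hp hpm]
    rcases H with H | H
    · left
      rw [htot, hdm]
      set t := Nat.totient m with ht_def
      calc 8 * (p * m) = p * (8 * m) := by ring
        _ ≤ p * (t * (t + 2)) := Nat.mul_le_mul_left _ H
        _ ≤ (p * t) * (p * t + 2) := by
            have h0 := Nat.mul_le_mul_left p (Nat.le_mul_of_pos_left (t*t) hp.pos)
            nlinarith [h0]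
    · have hple : p ≤ m := Nat.le_of_dvd hm hpm
      have hm90 : m ≤ 90 := (hmS H).2
      rcases K2 m H p (by omega) hpm hp2 with h | h
      · left; rw [htot, hdm]; exact h
      · right; rw [hdm]; exact h
  · -- p coprime to m
    have hco : Nat.Coprime p m := (Nat.Prime.coprime_iff_not_dvd hp).mpr hpm
    have htot : Nat.totient d = (p - 1) * Nat.totient m := by
      rw [hdm, Nat.totient_mul hco, Nat.totient_prime hp]
    by_cases hp2' : p = 2
    · have hm1 : m = 1 := by
        by_contra hm1
        have h1m : 1 < m := by omega
        obtain ⟨q, hq⟩ := Nat.nonempty_primeFactors.mpr h1m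
        obtain ⟨hqp, hqm, -⟩ := Nat.mem_primeFactors.mp hq
        have hqd : q ∈ d.primeFactors := Nat.mem_primeFactors.mpr
          ⟨hqp, hqm.trans ⟨p, by rw [hdm]; ring⟩, by omega⟩
        have hqle : q ≤ p := hmax q hqd
        have hq2' : q = 2 := by have := hqp.two_le; omega
        exact hpm (hp2' ▸ hq2' ▸ hqm)
      right
      rw [hdm, hp2', hm1]; decide
    have hp3 : 3 ≤ p := by omega
    rcases H with H | H
    · left
      set t := Nat.totient m with ht_def
      have ht2 : 2 ≤ t := by nlinarith
      rw [htot, hdm]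
      set q := p - 1 with hq_def
      have hqp : q + 1 = p := by omega
      have hq2 : 2 ≤ q := by omega
      calc 8 * (p * m) = (q + 1) * (8 * m) := by rw [hqp]; ring
        _ ≤ (q + 1) * (t * (t + 2)) := Nat.mul_le_mul_left _ H
        _ ≤ (q * t) * (q * t + 2) := by
            have h1 : (q+2)*(t*t) ≤ (q*q)*(t*t) := Nat.mul_le_mul_right _ (by nlinarith)
            have h2 : 2*t ≤ t*t := Nat.mul_le_mul_right t ht2
            nlinarith [h1, h2]
    · rcases lt_or_ge p 722 with hplt | hpge
      · rcases K1 m H p hplt hp2 hco with h | h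
        · left; rw [htot, hdm]; exact h
        · right; rw [hdm]; exact h
      · left
        rw [htot, hdm]
        have hm90 : m ≤ 90 := (hmS H).2
        set t := Nat.totient m with ht_def
        set q := p - 1 with hq_def
        have hqp : q + 1 = p := by omega
        have hq721 : 721 ≤ q := by omega
        have hqt : q ≤ q * t := Nat.le_mul_of_pos_right q ht1
        calc 8 * (p * m) ≤ 8 * (p * 90) := by
              exact Nat.mul_le_mul_left _ (Nat.mul_le_mul_left _ hm90)
          _ = (q + 1) * 720 := by rw [hqp]; ring
          _ ≤ q * (q + 2) := by nlinarith
          _ ≤ (q * t) * (q * t + 2) := by nlinarith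

private lemma gauss12 (k : ℕ) : 2 * ∑ i ∈ Finset.Icc 1 k, i = k * (k + 1) := by
  induction k with
  | zero => simp
  | succ n ih => rw [Finset.sum_Icc_succ_top (by omega)]; ring_nf; ring_nf at ih; omega

/-!
STATEMENT 12.
For a positive integer `d`, the inequality `φ(d)·(φ(d)+2) < 8d` — which for even
`φ(d)` is equivalent to `Σ_{j=1}^{φ(d)/2} j/d < 1` — holds iff `d` belongs to the
listed finite set.
-/

theorem stmt12 (d : ℕ) (hd : 0 < d) :
    (Even (Nat.totient d) →
      ((∑ j ∈ Finset.Icc 1 (Nat.totient d / 2), (j : ℚ) / d) < 1 ↔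
        Nat.totient d * (Nat.totient d + 2) < 8 * d)) ∧
    (Nat.totient d * (Nat.totient d + 2) < 8 * d ↔
      d ∈ ({1, 2, 3, 4, 5, 6, 7, 8, 9, 10, 12, 14, 15, 16, 18, 20, 22, 24, 26, 28,
            30, 36, 40, 42, 48, 54, 60, 66, 84, 90} : Finset ℕ)) := by
  have hSS : S12 = ({1, 2, 3, 4, 5, 6, 7, 8, 9, 10, 12, 14, 15, 16, 18, 20, 22, 24, 26, 28,
            30, 36, 40, 42, 48, 54, 60, 66, 84, 90} : Finset ℕ) := rfl
  constructor
  · intro he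
    obtain ⟨k, hk⟩ := he
    have hk2 : Nat.totient d / 2 = k := by omega
    rw [hk2, ← Finset.sum_div, div_lt_one (by exact_mod_cast hd : (0:ℚ) < (d:ℚ)),
      ← Nat.cast_sum, Nat.cast_lt]
    have hg := gauss12 k
    have h4 : Nat.totient d * (Nat.totient d + 2) = 4 * (k * (k + 1)) := by rw [hk]; ring
    omega
  · constructor
    · intro h
      by_contra hds
      rcases main12 d hd with h' | h'
      · omega
      · exact hds (hSS ▸ h')
    · intro h
      exact Sineq d (hSS ▸ h)
end

section
/- Let n ≥ 2, a ∈ ℂ nonzero, B a positive-definite hermitian (n−1)×(n−1) complex matrix, and Q the (n+1)×(n+1) block matrix [[0,0,a],[0,B,0],[ā,0,0]]. The set of unipotent matrices g ∈ GL(n+1,ℂ) (i.e. g − I is nilpotent) satisfying g†Qg = Q and g(ℂe_1) = ℂe_1 is exactly the set of block matrices g = [[1,v,w],[0,I_{n−1},y],[0,0,1]] — with w ∈ ℂ, v a row vector and y a column vector in ℂ^{n−1} — satisfying B·y + v†·a = 0 and y†By + ā·w + a·w̄ = 0. In particular, any unipotent X with X†BX = B for a positive-definite hermitian B equals the identity.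 -/
open Matrix Complex
open scoped ComplexOrder

lemma auxTrace {m : Type*} [Fintype m] {M : Matrix m m ℂ}
    (h : Matrix.trace (Mᴴ * M) = 0) : M = 0 := by
  have h1 : Matrix.trace (Mᴴ * M) = ((∑ k, ∑ p, Complex.normSq (M p k) : ℝ) : ℂ) := by
    simp [Matrix.trace, Matrix.diag, Matrix.mul_apply, Matrix.conjTranspose_apply,
      Complex.normSq_eq_conj_mul_self]
  rw [h1, Complex.ofReal_eq_zero] at h
  have h2 := (Finset.sum_eq_zero_iff_of_nonneg (fun k _ => Finset.sum_nonneg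
    (fun p _ => Complex.normSq_nonneg _))).mp h
  ext i j
  have h3 := (Finset.sum_eq_zero_iff_of_nonneg (fun p _ => Complex.normSq_nonneg _)).mp
    (h2 j (Finset.mem_univ _)) i (Finset.mem_univ _)
  simpa using Complex.normSq_eq_zero.mp h3

open scoped MatrixOrder in
lemma auxKey {m : Type*} [Fintype m] [DecidableEq m] (B : Matrix m m ℂ) (hB : B.PosDef)
    (X : Matrix m m ℂ) (hX : IsNilpotent (X - 1)) (hXB : Xᴴ * B * X = B) : X = 1 := by
  have hps := hB.posSemidef
  set C := CFC.sqrt B with hCdef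
  have hCC : C * C = B := CFC.sqrt_mul_sqrt_self B hps.nonneg
  have hCh : Cᴴ = C := (CFC.sqrt_nonneg B).posSemidef.isHermitian
  have hCdet : IsUnit C.det := by
    have : C.det * C.det = B.det := by rw [← det_mul, hCC]
    have hBdet : B.det ≠ 0 := ne_of_gt hB.det_pos
    exact isUnit_iff_ne_zero.mpr (fun h0 => hBdet (by rw [← this, h0, mul_zero]))
  have hCinv : C * C⁻¹ = 1 := mul_nonsing_inv C hCdet
  have hinvC : C⁻¹ * C = 1 := nonsing_inv_mul C hCdet
  set M := C * (X - 1) * C⁻¹ with hM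
  have hCinvH : C⁻¹ᴴ = C⁻¹ := by rw [conjTranspose_nonsing_inv, hCh]
  have hU : (1 + M)ᴴ * (1 + M) = 1 := by
    have h1 : (1 : Matrix m m ℂ) + M = C * X * C⁻¹ := by
      rw [hM, mul_sub, sub_mul, mul_one]
      rw [hCinv]; noncomm_ring
    rw [h1]
    calc (C * X * C⁻¹)ᴴ * (C * X * C⁻¹)
        = C⁻¹ᴴ * (Xᴴ * (Cᴴ * C * X) * C⁻¹) := by
          simp only [conjTranspose_mul]; noncomm_ring
      _ = 1 := by
          rw [hCh, hCC]
          rw [show Xᴴ * (B * X) * C⁻¹ = (Xᴴ * B * X) * C⁻¹ by noncomm_ring, hXB, hCinvH,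
            ← hCC, show C * C * C⁻¹ = C * (C * C⁻¹) by noncomm_ring, hCinv, mul_one, hinvC]
  have hMrel : Mᴴ + M + Mᴴ * M = 0 := by
    have := hU
    simp only [conjTranspose_add, conjTranspose_one, add_mul, mul_add, one_mul, mul_one] at this
    -- 1 + M + Mᴴ + Mᴴ*M = 1
    linear_combination (norm := noncomm_ring) this - (1 : Matrix m m ℂ)
  have htrM : Matrix.trace M = 0 := by
    have : Matrix.trace M = Matrix.trace (X - 1) := by
      rw [hM, Matrix.trace_mul_cycle, show C⁻¹ * C * (X-1) = (C⁻¹ * C) * (X - 1) by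
        noncomm_ring, hinvC, one_mul]
    rw [this]
    exact IsNilpotent.eq_zero (Matrix.isNilpotent_trace_of_isNilpotent hX)
  have htr : Matrix.trace (Mᴴ * M) = 0 := by
    have := congrArg Matrix.trace hMrel
    simp only [Matrix.trace_add, Matrix.trace_zero, Matrix.trace_conjTranspose, htrM,
      star_zero, zero_add] at this
    exact this
  have hM0 : M = 0 := auxTrace htr
  have e1 : C * (X - 1) = 0 := by
    calc C * (X - 1) = C * (X - 1) * (C⁻¹ * C) := by rw [hinvC, mul_one]
      _ = (C * (X - 1) * C⁻¹) * C := by noncomm_ring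
      _ = 0 := by rw [← hM, hM0, zero_mul]
  have e2 : X - 1 = 0 := by
    calc X - 1 = (C⁻¹ * C) * (X - 1) := by rw [hinvC, one_mul]
      _ = C⁻¹ * (C * (X - 1)) := by rw [mul_assoc]
      _ = 0 := by rw [e1, mul_zero]
  exact sub_eq_zero.mp e2

lemma auxBlock {m : Type*} [Fintype m] [DecidableEq m]
    (N : Matrix (Fin 1 ⊕ (m ⊕ Fin 1)) (Fin 1 ⊕ (m ⊕ Fin 1)) ℂ)
    (A : Matrix m m ℂ)
    (hA : ∀ i j, A i j = N (Sum.inr (Sum.inl i)) (Sum.inr (Sum.inl j)))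
    (hcol : ∀ i, N i (Sum.inl 0) = 0)
    (hu : ∀ (z : Fin 1) j, N (Sum.inr (Sum.inr z)) (Sum.inr (Sum.inl j)) = 0) :
    ∀ k : ℕ, (∀ i, (N ^ (k+1)) i (Sum.inl 0) = 0) ∧
      (∀ i j, (N ^ (k+1)) (Sum.inr (Sum.inl i)) (Sum.inr (Sum.inl j)) = (A ^ (k+1)) i j) := by
  intro k
  induction k with
  | zero => simpa [hA] using hcol
  | succ k ih =>
    obtain ⟨ih1, ih2⟩ := ih
    constructor
    · intro i
      rw [pow_succ, Matrix.mul_apply]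
      exact Finset.sum_eq_zero fun l _ => by rw [hcol l, mul_zero]
    · intro i j
      rw [pow_succ, Matrix.mul_apply, pow_succ A (k+1), Matrix.mul_apply]
      rw [Fintype.sum_sum_type, Fintype.sum_sum_type]
      have e1 : ∑ z : Fin 1, (N ^ (k+1)) (Sum.inr (Sum.inl i)) (Sum.inl z) * N (Sum.inl z) (Sum.inr (Sum.inl j)) = 0 := by
        rw [Fin.sum_univ_one, ih1, zero_mul]
      have e3 : ∑ z : Fin 1, (N ^ (k+1)) (Sum.inr (Sum.inl i)) (Sum.inr (Sum.inr z)) * N (Sum.inr (Sum.inr z)) (Sum.inr (Sum.inl j)) = 0 := by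
        rw [Fin.sum_univ_one, hu, mul_zero]
      rw [e1, e3, zero_add, add_zero]
      exact Finset.sum_congr rfl fun l _ => by rw [ih2, hA]

set_option synthInstance.maxHeartbeats 800000
set_option maxHeartbeats 1000000

theorem stmt15
    (n : ℕ) (hn : 2 ≤ n)
    (a : ℂ) (ha : a ≠ 0)
    (B : Matrix (Fin (n - 1)) (Fin (n - 1)) ℂ) (hB : B.PosDef)
    (Q : Matrix (Fin 1 ⊕ (Fin (n - 1) ⊕ Fin 1)) (Fin 1 ⊕ (Fin (n - 1) ⊕ Fin 1)) ℂ)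
    (hQ : Q = fun i j => match i, j with
      | Sum.inl _, Sum.inr (Sum.inr _) => a
      | Sum.inr (Sum.inr _), Sum.inl _ => (starRingEnd ℂ) a
      | Sum.inr (Sum.inl i'), Sum.inr (Sum.inl j') => B i' j'
      | _, _ => 0) :
    (∀ g : GL (Fin 1 ⊕ (Fin (n - 1) ⊕ Fin 1)) ℂ,
      (IsNilpotent
          ((g : Matrix (Fin 1 ⊕ (Fin (n - 1) ⊕ Fin 1)) (Fin 1 ⊕ (Fin (n - 1) ⊕ Fin 1)) ℂ) - 1) ∧
        (g : Matrix (Fin 1 ⊕ (Fin (n - 1) ⊕ Fin 1)) (Fin 1 ⊕ (Fin (n - 1) ⊕ Fin 1)) ℂ)ᴴ * Q *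
          (g : Matrix (Fin 1 ⊕ (Fin (n - 1) ⊕ Fin 1)) (Fin 1 ⊕ (Fin (n - 1) ⊕ Fin 1)) ℂ) = Q ∧
        Submodule.map
          (Matrix.mulVecLin
            (g : Matrix (Fin 1 ⊕ (Fin (n - 1) ⊕ Fin 1)) (Fin 1 ⊕ (Fin (n - 1) ⊕ Fin 1)) ℂ))
          (Submodule.span ℂ {Pi.single (Sum.inl 0) 1}) =
          Submodule.span ℂ {(Pi.single (Sum.inl 0) 1 : Fin 1 ⊕ (Fin (n - 1) ⊕ Fin 1) → ℂ)}) ↔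
      ∃ (w : ℂ) (v y : Fin (n - 1) → ℂ),
        (g : Matrix (Fin 1 ⊕ (Fin (n - 1) ⊕ Fin 1)) (Fin 1 ⊕ (Fin (n - 1) ⊕ Fin 1)) ℂ) =
          (fun i j => match i, j with
            | Sum.inl _, Sum.inl _ => 1
            | Sum.inl _, Sum.inr (Sum.inl j') => v j'
            | Sum.inl _, Sum.inr (Sum.inr _) => w
            | Sum.inr (Sum.inl i'), Sum.inr (Sum.inl j') => if i' = j' then 1 else 0
            | Sum.inr (Sum.inl i'), Sum.inr (Sum.inr _) => y i'
            | Sum.inr (Sum.inr _), Sum.inr (Sum.inr _) => 1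
            | _, _ => 0) ∧
        B.mulVec y + a • star v = 0 ∧
        star y ⬝ᵥ B.mulVec y + (starRingEnd ℂ) a * w + a * (starRingEnd ℂ) w = 0) ∧
    (∀ X : Matrix (Fin (n - 1)) (Fin (n - 1)) ℂ,
      IsNilpotent (X - 1) → Xᴴ * B * X = B → X = 1) := by
  have hQe : ∀ i j, Q i j = _ := fun i j => congrFun (congrFun hQ i) j
  constructor
  · intro g
    set G := (g : Matrix (Fin 1 ⊕ (Fin (n - 1) ⊕ Fin 1)) (Fin 1 ⊕ (Fin (n - 1) ⊕ Fin 1)) ℂ)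
      with hGdef
    constructor
    · rintro ⟨hnil, hQg, hspan⟩
      -- notation
      set e : Fin 1 ⊕ (Fin (n - 1) ⊕ Fin 1) → ℂ := Pi.single (Sum.inl 0) 1 with he
      -- Step A : the first column of G is e
      have hmape : Matrix.mulVecLin G e ∈ Submodule.span ℂ {e} := by
        rw [← hspan]
        exact Submodule.mem_map_of_mem (Submodule.mem_span_singleton_self e)
      obtain ⟨c, hc⟩ := Submodule.mem_span_singleton.mp hmape
      rw [Matrix.mulVecLin_apply] at hc
      have hGe : G *ᵥ e = c • e := hc.symm
      have hNe : (G - 1) *ᵥ e = (c - 1) • e := by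
        rw [Matrix.sub_mulVec, Matrix.one_mulVec, hGe, sub_smul, one_smul]
      have hpow : ∀ k, ((G - 1) ^ k) *ᵥ e = (c - 1) ^ k • e := by
        intro k
        induction k with
        | zero => simp
        | succ k ih =>
          rw [pow_succ', ← Matrix.mulVec_mulVec, ih, Matrix.mulVec_smul, hNe, smul_smul,
            ← pow_succ]
      have hc1 : c = 1 := by
        obtain ⟨k, hk⟩ := hnil
        have hk1 : (G - 1) ^ (k + 1) = 0 := by rw [pow_succ, hk, zero_mul]
        have h0 := congrFun ((hk1 ▸ hpow (k + 1)).symm) (Sum.inl 0)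
        simp only [Matrix.zero_mulVec, Pi.zero_apply, Pi.smul_apply, he,
          Pi.single_eq_same, smul_eq_mul, mul_one] at h0
        have h2 : (c - 1) ^ (k + 1) = 0 := h0
        have h3 := pow_eq_zero_iff (Nat.succ_ne_zero k) |>.mp h2
        exact sub_eq_zero.mp h3
      rw [hc1, one_smul] at hGe
      have h1 : ∀ i, G i (Sum.inl 0) = e i := by
        intro i
        have h2 := congrFun hGe i
        simpa [Matrix.mulVec, dotProduct, he, Pi.single_apply, Fintype.sum_sum_type,
          Fin.sum_univ_one] using h2
      have hG00 : ∀ z z' : Fin 1, G (Sum.inl z) (Sum.inl z') = 1 := by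
        intro z z'
        rw [Subsingleton.elim z (0 : Fin 1), Subsingleton.elim z' (0 : Fin 1)]
        simpa [he] using h1 (Sum.inl 0)
      have hGm0 : ∀ x (z : Fin 1), G (Sum.inr x) (Sum.inl z) = 0 := by
        intro x z
        rw [Subsingleton.elim z (0 : Fin 1)]
        simpa [he] using h1 (Sum.inr x)
      have hq := Matrix.ext_iff.mpr hQg
      have probe1 := fun (j' : Fin (n-1)) => hq (Sum.inl 0) (Sum.inr (Sum.inl j'))
      simp [Matrix.mul_apply, Matrix.conjTranspose_apply, Fintype.sum_sum_type,
        Fin.sum_univ_one, hQe, hG00, hGm0] at probe1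
      have probe2 := hq (Sum.inl 0) (Sum.inr (Sum.inr 0))
      simp [Matrix.mul_apply, Matrix.conjTranspose_apply, Fintype.sum_sum_type,
        Fin.sum_univ_one, hQe, hG00, hGm0] at probe2
      have hu : ∀ (z : Fin 1) j', G (Sum.inr (Sum.inr z)) (Sum.inr (Sum.inl j')) = 0 := by
        intro z j'
        rw [Subsingleton.elim z (0 : Fin 1)]
        exact (probe1 j').resolve_left ha
      have probe3 := fun (i' j' : Fin (n-1)) => hq (Sum.inr (Sum.inl i')) (Sum.inr (Sum.inl j'))
      simp [Matrix.mul_apply, Matrix.conjTranspose_apply, Fintype.sum_sum_type,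
        Fin.sum_univ_one, hQe, hG00, hGm0, hu] at probe3
      have probe4 := fun (i' : Fin (n-1)) => hq (Sum.inr (Sum.inl i')) (Sum.inr (Sum.inr 0))
      simp [Matrix.mul_apply, Matrix.conjTranspose_apply, Fintype.sum_sum_type,
        Fin.sum_univ_one, hQe, hG00, hGm0, hu] at probe4
      have probe5 := hq (Sum.inr (Sum.inr 0)) (Sum.inr (Sum.inr 0))
      simp [Matrix.mul_apply, Matrix.conjTranspose_apply, Fintype.sum_sum_type,
        Fin.sum_univ_one, hQe, hG00, hGm0, hu, probe2] at probe5
      have ht : G (Sum.inr (Sum.inr 0)) (Sum.inr (Sum.inr 0)) = 1 :=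
        mul_left_cancel₀ ha (probe2.trans (mul_one a).symm)
      set A : Matrix (Fin (n - 1)) (Fin (n - 1)) ℂ :=
        Matrix.of (fun i' j' => G (Sum.inr (Sum.inl i')) (Sum.inr (Sum.inl j'))) with hAdef
      have hAB : Aᴴ * B * A = B := by
        ext i j
        have h6 := probe3 i j
        rw [← h6]
        simp [Matrix.mul_apply, Matrix.conjTranspose_apply, hAdef]
      have hnilA : IsNilpotent (A - 1) := by
        have ha' : ∀ i j, (A - 1) i j = (G - 1) (Sum.inr (Sum.inl i)) (Sum.inr (Sum.inl j)) := by
          intro i j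
          simp [hAdef, Matrix.sub_apply, Matrix.one_apply]
        have hcol' : ∀ i, (G - 1) i (Sum.inl 0) = 0 := by
          intro i
          rcases i with z | x
          · simp [Matrix.sub_apply, hG00, Matrix.one_apply, Subsingleton.elim z (0 : Fin 1)]
          · simp [Matrix.sub_apply, hGm0, Matrix.one_apply]
        have hu'' : ∀ (z : Fin 1) j,
            (G - 1) (Sum.inr (Sum.inr z)) (Sum.inr (Sum.inl j)) = 0 := by
          intro z j
          simp [Matrix.sub_apply, hu, Matrix.one_apply]
        obtain ⟨k, hk⟩ := hnil
        refine ⟨k + 1, ?_⟩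
        ext i j
        rw [← (auxBlock (G - 1) (A - 1) ha' hcol' hu'' k).2 i j, pow_succ, hk, zero_mul]
        simp
      have hA1 : A = 1 := auxKey B hB A hnilA hAB
      have hmid : ∀ i j, G (Sum.inr (Sum.inl i)) (Sum.inr (Sum.inl j)) =
          if i = j then 1 else 0 := by
        intro i j
        have h5 := Matrix.ext_iff.mpr hA1 i j
        simpa [hAdef, Matrix.one_apply] using h5
      refine ⟨G (Sum.inl 0) (Sum.inr (Sum.inr 0)),
        fun j' => G (Sum.inl 0) (Sum.inr (Sum.inl j')),
        fun i' => G (Sum.inr (Sum.inl i')) (Sum.inr (Sum.inr 0)), ?_, ?_, ?_⟩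
      · ext i j
        rcases i with z | i | z <;> rcases j with z' | j' | z'
        · simpa using hG00 z z'
        · simp [Subsingleton.elim z (0 : Fin 1)]
        · simp [Subsingleton.elim z (0 : Fin 1), Subsingleton.elim z' (0 : Fin 1)]
        · simpa using hGm0 (Sum.inl i) z'
        · simpa using hmid i j'
        · simp [Subsingleton.elim z' (0 : Fin 1)]
        · simpa using hGm0 (Sum.inr z) z'
        · simpa using hu z j'
        · rw [Subsingleton.elim z (0 : Fin 1), Subsingleton.elim z' (0 : Fin 1)]
          simpa using ht
      · funext i
        have h6 := probe4 i
        simp only [hmid, ht, apply_ite (starRingEnd ℂ), _root_.map_one, _root_.map_zero, ite_mul, one_mul,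
          zero_mul, Finset.sum_ite_eq, Finset.sum_ite_eq', Finset.mem_univ, if_true, mul_one] at h6
        simp only [Pi.add_apply, Matrix.mulVec, dotProduct, Pi.smul_apply, Pi.star_apply,
          RCLike.star_def, smul_eq_mul, Pi.zero_apply]
        linear_combination h6
      · simp only [ht, _root_.map_one, one_mul, mul_one] at probe5
        have e2 : ∑ x, (∑ x1, (starRingEnd ℂ) (G (Sum.inr (Sum.inl x1)) (Sum.inr (Sum.inr 0)))
              * B x1 x) * G (Sum.inr (Sum.inl x)) (Sum.inr (Sum.inr 0)) =
            ∑ k, (starRingEnd ℂ) (G (Sum.inr (Sum.inl k)) (Sum.inr (Sum.inr 0))) *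
              ∑ l, B k l * G (Sum.inr (Sum.inl l)) (Sum.inr (Sum.inr 0)) := by
          calc _ = ∑ x, ∑ x1, (starRingEnd ℂ) (G (Sum.inr (Sum.inl x1)) (Sum.inr (Sum.inr 0)))
                * B x1 x * G (Sum.inr (Sum.inl x)) (Sum.inr (Sum.inr 0)) := by
                exact Finset.sum_congr rfl fun x _ => Finset.sum_mul _ _ _
            _ = ∑ x1, ∑ x, (starRingEnd ℂ) (G (Sum.inr (Sum.inl x1)) (Sum.inr (Sum.inr 0)))
                * B x1 x * G (Sum.inr (Sum.inl x)) (Sum.inr (Sum.inr 0)) := Finset.sum_comm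
            _ = _ := by
                refine Finset.sum_congr rfl fun k _ => ?_
                rw [Finset.mul_sum]
                exact Finset.sum_congr rfl fun l _ => by ring
        rw [e2] at probe5
        simp only [dotProduct, Matrix.mulVec, Pi.star_apply, RCLike.star_def]
        linear_combination probe5
    · rintro ⟨w, v, y, hGeq, hv, hw⟩
      have hv' : ∀ i, (∑ l, B i l * y l) = -(a * (starRingEnd ℂ) (v i)) := by
        intro i
        have h0 := congrFun hv i
        simp only [Pi.add_apply, Matrix.mulVec, dotProduct, Pi.smul_apply,
          Pi.star_apply, RCLike.star_def, smul_eq_mul, Pi.zero_apply] at h0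
        linear_combination h0
      have hBh : ∀ k l : Fin (n-1), (starRingEnd ℂ) (B k l) = B l k := by
        intro k l; exact hB.isHermitian.apply l k
      have hv'' : ∀ j, (∑ k, (starRingEnd ℂ) (y k) * B k j) = -((starRingEnd ℂ) a * v j) := by
        intro j
        have h0 := congrArg (starRingEnd ℂ) (hv' j)
        simp only [map_sum, _root_.map_mul, map_neg, Complex.conj_conj, hBh] at h0
        rw [← h0]
        exact Finset.sum_congr rfl fun l _ => mul_comm _ _
      have hw' : (∑ k, (starRingEnd ℂ) (y k) * ∑ l, B k l * y l)
          + (starRingEnd ℂ) a * w + a * (starRingEnd ℂ) w = 0 := by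
        have h0 := hw
        simp only [dotProduct, Matrix.mulVec, Pi.star_apply, RCLike.star_def] at h0
        linear_combination h0
      refine ⟨⟨3, ?_⟩, ?_, ?_⟩
      · ext i j
        have hGent : ∀ i j, G i j = _ := fun i j => congrFun (congrFun hGeq i) j
        rw [pow_succ, pow_succ, pow_one]
        rcases i with z | i | z <;> rcases j with z' | jj | z' <;>
          simp [Matrix.mul_apply, Fintype.sum_sum_type, Matrix.sub_apply, Matrix.one_apply,
            Fin.sum_univ_one, hGent, Finset.mul_sum, Finset.sum_mul, eq_iff_true_of_subsingleton]
      · ext i j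
        have hGent : ∀ i j, G i j = _ := fun i j => congrFun (congrFun hGeq i) j
        rcases i with z | i | z <;> rcases j with z' | jj | z' <;>
          simp [Matrix.mul_apply, Matrix.conjTranspose_apply, Fintype.sum_sum_type, hQe, hGent,
            Fin.sum_univ_one, Finset.mul_sum, Finset.sum_mul, mul_comm, mul_left_comm,
            hv', hv'', hw', eq_iff_true_of_subsingleton]
        · -- (last, mid) case
          have e1 : ∑ x, B x jj * (starRingEnd ℂ) (y x) = ∑ x, (starRingEnd ℂ) (y x) * B x jj :=
            Finset.sum_congr rfl fun x _ => mul_comm _ _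
          rw [e1, hv'' jj]; ring
        · -- (last, last) case
          have e2 : ∑ x, ∑ x1, B x1 x * (y x * (starRingEnd ℂ) (y x1)) =
              ∑ k, (starRingEnd ℂ) (y k) * ∑ l, B k l * y l := by
            rw [Finset.sum_comm]
            refine Finset.sum_congr rfl fun k _ => ?_
            rw [Finset.mul_sum]
            exact Finset.sum_congr rfl fun l _ => by ring
          rw [e2]
          linear_combination hw'
      · have he : Matrix.mulVecLin G (Pi.single (Sum.inl 0) 1) =
            (Pi.single (Sum.inl 0) 1 : Fin 1 ⊕ (Fin (n - 1) ⊕ Fin 1) → ℂ) := by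
          rw [Matrix.mulVecLin_apply, hGeq]
          ext i
          rcases i with z | i | z <;>
            simp [Matrix.mulVec, dotProduct, Fintype.sum_sum_type, Fin.sum_univ_one,
              Pi.single_apply, eq_iff_true_of_subsingleton]
        rw [Submodule.map_span, Set.image_singleton, he]
  · intro X h1 h2
    exact auxKey B hB X h1 h2
end
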